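/- arXiv:2301.05633 — 6 statements merged into one kernel-verified Lean document; each statement's English description precedes it below -/
import Mathlib

section
/- If a(i) = α^i for fixed 0 < α < 1, then the variance of the time for the particle to descend from state r to state 0 equals (1 − α^r)(1 − α^{r+1})/((1 − α^2)·α^{2r}). -/
open MeasureTheory ProbabilityTheory Finset
open scoped ENNReal NNReal

/-- Integral of a real function against a measure on `ℕ` with given singleton masses. -/
lemma nat_integral_aux {ν : Measure ℕ} {c : ℕ → ℝ} (hc : ∀ n, 0 ≤ c n)
    (h0 : ν {0} = 0) (hν : ∀ n, ν {n + 1} = ENNReal.ofReal (c n)) (f : ℕ → ℝ)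
    (hs : Summable (fun n => ‖f (n + 1)‖ * c n)) :
    Integrable f ν ∧ ∫ n, f n ∂ν = ∑' n, c n * f (n + 1) := by
  have hmeas : Measurable f := measurable_from_top
  have hterm : ∀ n : ℕ, ((‖f (n+1)‖₊ : ℝ≥0∞)) * ν {n+1}
      = ENNReal.ofReal (‖f (n+1)‖ * c n) := by
    intro n
    rw [hν n, ENNReal.ofReal_mul (norm_nonneg _), ofReal_norm, enorm_eq_nnnorm]
  have hint : Integrable f ν := by
    refine ⟨hmeas.aestronglyMeasurable, ?_⟩
    rw [HasFiniteIntegral, lintegral_countable' (fun n => ‖f n‖ₑ)]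
    rw [tsum_eq_zero_add' ENNReal.summable, h0, mul_zero, zero_add]
    calc ∑' n, ((‖f (n+1)‖₊ : ℝ≥0∞)) * ν {n+1}
        = ∑' n, ENNReal.ofReal (‖f (n+1)‖ * c n) := by
          exact tsum_congr hterm
      _ = ENNReal.ofReal (∑' n, ‖f (n+1)‖ * c n) :=
          (ENNReal.ofReal_tsum_of_nonneg
            (fun n => mul_nonneg (norm_nonneg _) (hc n)) hs).symm
      _ < ⊤ := ENNReal.ofReal_lt_top
  refine ⟨hint, ?_⟩
  rw [integral_countable' hint]
  have hg : ∀ n : ℕ, (ν {n+1}).toReal • f (n+1) = c n * f (n+1) := by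
    intro n
    rw [hν n, ENNReal.toReal_ofReal (hc n), smul_eq_mul]
  have hs2 : Summable (fun n : ℕ => (ν {n+1}).toReal • f (n+1)) := by
    refine Summable.of_norm ?_
    refine hs.congr fun n => ?_
    rw [hg n, norm_mul, Real.norm_of_nonneg (hc n), mul_comm]
  have hS : Summable (fun n : ℕ => (ν {n}).toReal • f n) :=
    (summable_nat_add_iff 1).mp hs2
  simp only [measureReal_def]
  rw [hS.tsum_eq_zero_add, h0]
  simp only [ENNReal.toReal_zero, zero_smul, zero_add]
  exact tsum_congr hg

/-- Moments of an `ℕ`-valued geometric random variable (trials until first success). -/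
lemma geom_var_aux {Ω : Type*} [MeasurableSpace Ω] (μ : Measure Ω) [IsProbabilityMeasure μ]
    (p : ℝ) (hp : 0 < p) (hp1 : p ≤ 1) (X : Ω → ℕ) (hX : Measurable X)
    (hgeom : ∀ k, 1 ≤ k → μ {ω | X ω = k} = ENNReal.ofReal ((1 - p) ^ (k - 1) * p)) :
    MemLp (fun ω => (X ω : ℝ)) 2 μ ∧
      variance (fun ω => (X ω : ℝ)) μ = (1 - p) / p ^ 2 := by
  set q : ℝ := 1 - p with hqdef
  have hq0 : 0 ≤ q := by simp [hqdef]; linarith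
  have hq1 : q < 1 := by simp [hqdef]; linarith
  have hqn : ‖q‖ < 1 := by rw [Real.norm_of_nonneg hq0]; exact hq1
  have hp' : p ≠ 0 := ne_of_gt hp
  set ν : Measure ℕ := μ.map X with hνdef
  haveI : IsProbabilityMeasure ν := Measure.isProbabilityMeasure_map hX.aemeasurable
  have hν : ∀ n : ℕ, ν {n + 1} = ENNReal.ofReal (q ^ n * p) := by
    intro n
    rw [hνdef, Measure.map_apply hX (measurableSet_singleton _)]
    have := hgeom (n + 1) (by omega)
    simpa [Set.preimage] using this
  -- total mass of the successor part is 1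
  have hsumgeo : Summable (fun n : ℕ => q ^ n) := summable_geometric_of_lt_one hq0 hq1
  have htot : ∑' n : ℕ, ν {n + 1} = 1 := by
    calc ∑' n : ℕ, ν {n+1} = ∑' n : ℕ, ENNReal.ofReal (q ^ n * p) := tsum_congr hν
      _ = ENNReal.ofReal (∑' n : ℕ, q ^ n * p) :=
          (ENNReal.ofReal_tsum_of_nonneg (fun n => mul_nonneg (pow_nonneg hq0 _) hp.le)
            (hsumgeo.mul_right p)).symm
      _ = 1 := by
          rw [tsum_mul_right, tsum_geometric_of_lt_one hq0 hq1]
          have : (1 - q)⁻¹ * p = 1 := by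
            rw [hqdef, sub_sub_cancel, inv_mul_cancel₀ hp']
          rw [this, ENNReal.ofReal_one]
  have h0 : ν {0} = 0 := by
    have huniv : ν Set.univ = 1 := measure_univ
    have hdecomp : ν Set.univ = ∑' n : ℕ, ν {n} := by
      rw [← Set.iUnion_of_singleton ℕ]
      exact measure_iUnion (fun i j hij => Set.disjoint_singleton.2 hij)
        (fun i => measurableSet_singleton i)
    rw [hdecomp, tsum_eq_zero_add' ENNReal.summable, htot] at huniv
    have h' : 1 + ν {0} = 1 + 0 := by rw [add_zero, add_comm]; exact huniv
    exact (ENNReal.add_right_inj ENNReal.one_ne_top).mp h'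
  have hc : ∀ n : ℕ, (0:ℝ) ≤ q ^ n * p := fun n => mul_nonneg (pow_nonneg hq0 _) hp.le
  -- series facts
  have hS1 : Summable (fun n : ℕ => ((n : ℝ) + 1) * q ^ n) := by
    refine (summable_choose_mul_geometric_of_norm_lt_one 1 hqn).congr fun n => ?_
    rw [Nat.choose_one_right]
    push_cast; ring
  have hT1 : ∑' n : ℕ, ((n : ℝ) + 1) * q ^ n = 1 / p ^ 2 := by
    have h := tsum_choose_mul_geometric_of_norm_lt_one (𝕜 := ℝ) 1 hqn
    have heq : ∑' n : ℕ, ((n : ℝ) + 1) * q ^ n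
        = ∑' n : ℕ, (((n + 1).choose 1 : ℝ)) * q ^ n := by
      refine tsum_congr fun n => ?_
      rw [Nat.choose_one_right]; push_cast; ring
    rw [heq, h]
    have : (1:ℝ) - q = p := by simp [hqdef]
    rw [this]
  have hS2 : Summable (fun n : ℕ => ((n : ℝ) + 1) ^ 2 * q ^ n) := by
    have h2 := summable_choose_mul_geometric_of_norm_lt_one (R := ℝ) 2 hqn
    refine ((h2.mul_left 2).sub hS1).congr fun n => ?_
    rw [Nat.cast_choose_two]
    push_cast; ring
  have hT2 : ∑' n : ℕ, ((n : ℝ) + 1) ^ 2 * q ^ n = 2 / p ^ 3 - 1 / p ^ 2 := by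
    have h2 := tsum_choose_mul_geometric_of_norm_lt_one (𝕜 := ℝ) 2 hqn
    have heq : ∑' n : ℕ, ((n : ℝ) + 1) ^ 2 * q ^ n
        = ∑' n : ℕ, (2 * (((n + 2).choose 2 : ℝ)) * q ^ n - ((n : ℝ) + 1) * q ^ n) := by
      refine tsum_congr fun n => ?_
      rw [Nat.cast_choose_two]
      push_cast; ring
    have hsub := Summable.tsum_sub ((summable_choose_mul_geometric_of_norm_lt_one (R := ℝ) 2 hqn).mul_left 2) hS1
    rw [heq]
    rw [show (fun n : ℕ => 2 * (((n + 2).choose 2 : ℝ)) * q ^ n - ((n : ℝ) + 1) * q ^ n)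
        = (fun n : ℕ => 2 * ((((n + 2).choose 2 : ℝ)) * q ^ n) - ((n : ℝ) + 1) * q ^ n) by
        funext n; ring]
    rw [hsub, tsum_mul_left, h2, hT1]
    have : (1:ℝ) - q = p := by simp [hqdef]
    rw [this]; ring
  -- first moment
  have hf1 := nat_integral_aux hc h0 hν (fun n => (n : ℝ))
    (by
      refine (hS1.mul_right p).congr fun n => ?_
      rw [Real.norm_of_nonneg (by positivity : (0:ℝ) ≤ ((n:ℕ) + 1 : ℕ))]
      push_cast; ring)
  have hf2 := nat_integral_aux hc h0 hν (fun n => (n : ℝ) ^ 2)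
    (by
      refine (hS2.mul_right p).congr fun n => ?_
      rw [Real.norm_of_nonneg (by positivity)]
      push_cast; ring)
  have hmapint : ∀ g : ℕ → ℝ, ∫ ω, g (X ω) ∂μ = ∫ n, g n ∂ν := by
    intro g
    rw [hνdef, integral_map hX.aemeasurable
      (measurable_from_top (f := g)).aestronglyMeasurable]
  have hE1 : ∫ ω, (X ω : ℝ) ∂μ = 1 / p := by
    rw [hmapint (fun n => (n : ℝ)), hf1.2]
    have : ∑' n : ℕ, q ^ n * p * ((n : ℝ) + 1) = p * ∑' n : ℕ, ((n : ℝ) + 1) * q ^ n := by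
      rw [← tsum_mul_left]
      exact tsum_congr fun n => by push_cast; ring
    calc ∑' n : ℕ, q ^ n * p * ((n + 1 : ℕ) : ℝ)
        = p * ∑' n : ℕ, ((n : ℝ) + 1) * q ^ n := by
          rw [← tsum_mul_left]; exact tsum_congr fun n => by push_cast; ring
      _ = 1 / p := by rw [hT1]; field_simp
  have hE2 : ∫ ω, (X ω : ℝ) ^ 2 ∂μ = 2 / p ^ 2 - 1 / p := by
    rw [hmapint (fun n => (n : ℝ) ^ 2), hf2.2]
    calc ∑' n : ℕ, q ^ n * p * ((n + 1 : ℕ) : ℝ) ^ 2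
        = p * ∑' n : ℕ, ((n : ℝ) + 1) ^ 2 * q ^ n := by
          rw [← tsum_mul_left]; exact tsum_congr fun n => by push_cast; ring
      _ = 2 / p ^ 2 - 1 / p := by rw [hT2]; field_simp
  have haesm : AEStronglyMeasurable (fun ω => (X ω : ℝ)) μ :=
    ((measurable_from_top (f := fun n : ℕ => (n : ℝ))).comp hX).aestronglyMeasurable
  have hintsq : Integrable (fun ω => (X ω : ℝ) ^ 2) μ := by
    have := (integrable_map_measure
      (measurable_from_top (f := fun n : ℕ => (n : ℝ) ^ 2)).aestronglyMeasurable
      hX.aemeasurable).mp (by rw [← hνdef]; exact hf2.1)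
    exact this
  have hmem : MemLp (fun ω => (X ω : ℝ)) 2 μ :=
    (memLp_two_iff_integrable_sq haesm).mpr hintsq
  refine ⟨hmem, ?_⟩
  rw [variance_eq_sub hmem]
  have hpow : ∀ ω, ((fun ω => (X ω : ℝ)) ^ 2) ω = (X ω : ℝ) ^ 2 := fun ω => rfl
  have : μ[(fun ω => (X ω : ℝ)) ^ 2] = 2 / p ^ 2 - 1 / p := by
    rw [← hE2]; exact integral_congr_ae (Filter.Eventually.of_forall hpow)
  rw [this, hE1]
  field_simp
  ring

lemma geom_sum_formula (α : ℝ) (h0 : 0 < α) (h1 : α < 1) (r : ℕ) :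
    ∑ i ∈ Finset.Icc 1 r, (1 - α ^ i) / α ^ (2 * i)
      = (1 - α ^ r) * (1 - α ^ (r + 1)) / ((1 - α ^ 2) * α ^ (2 * r)) := by
  have hα : α ≠ 0 := ne_of_gt h0
  have h2 : (1:ℝ) - α ^ 2 ≠ 0 := by
    have : α ^ 2 < 1 := by
      calc α ^ 2 ≤ α := by nlinarith
        _ < 1 := h1
    linarith
  induction r with
  | zero => simp
  | succ n ih =>
    rw [Finset.sum_Icc_succ_top (by omega : 1 ≤ n + 1), ih]
    have hpow : ∀ m : ℕ, α ^ m ≠ 0 := fun m => pow_ne_zero m hα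
    field_simp
    ring

/-- If `a i = α^i` for fixed `0 < α < 1`, then the variance of the time for the
particle to descend from state `r` to state `0` (the sum of independent geometric random
variables with success probabilities `α^i`, `i = 1, …, r`) equals
`(1 − α^r)(1 − α^{r+1})/((1 − α²)·α^{2r})`. -/
theorem markov_descent_variance_geometric_rates
    {Ω : Type*} [MeasurableSpace Ω] (μ : Measure Ω) [IsProbabilityMeasure μ]
    (α : ℝ) (hα : 0 < α ∧ α < 1)
    (G : ℕ → Ω → ℕ) (hmeas : ∀ i, Measurable (G i))
    (hindep : iIndepFun G μ)
    (hgeom : ∀ i k, 1 ≤ k → μ {ω | G i ω = k} = ENNReal.ofReal ((1 - α ^ i) ^ (k - 1) * α ^ i))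
    (r : ℕ) :
    variance (fun ω => (∑ i ∈ Finset.Icc 1 r, (G i ω : ℝ))) μ =
      (1 - α ^ r) * (1 - α ^ (r + 1)) / ((1 - α ^ 2) * α ^ (2 * r)) := by
  obtain ⟨h0, h1⟩ := hα
  have hkey : ∀ i : ℕ, MemLp (fun ω => (G i ω : ℝ)) 2 μ ∧
      variance (fun ω => (G i ω : ℝ)) μ = (1 - α ^ i) / (α ^ i) ^ 2 := by
    intro i
    exact geom_var_aux μ (α ^ i) (pow_pos h0 i) (pow_le_one₀ h0.le h1.le)
      (G i) (hmeas i) (hgeom i)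
  have hpair : Set.Pairwise ↑(Finset.Icc 1 r)
      (fun i j => IndepFun (fun ω => (G i ω : ℝ)) (fun ω => (G j ω : ℝ)) μ) := by
    intro i _ j _ hij
    exact (hindep.indepFun hij).comp measurable_from_top measurable_from_top
  have hsum := IndepFun.variance_sum (μ := μ) (X := fun i => fun ω => (G i ω : ℝ))
    (s := Finset.Icc 1 r) (fun i _ => (hkey i).1) hpair
  have hfun : (fun ω => (∑ i ∈ Finset.Icc 1 r, (G i ω : ℝ)))
      = ∑ i ∈ Finset.Icc 1 r, (fun ω => (G i ω : ℝ)) := by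
    funext ω; simp
  rw [hfun, hsum]
  rw [← geom_sum_formula α h0 h1 r]
  refine Finset.sum_congr rfl fun i _ => ?_
  rw [(hkey i).2, ← pow_mul]
  ring_nf
end

section
/- In the ball-and-cell game with n ≥ 2 cells and 3 balls, the expected duration equals n(n+3)/(n²−1). -/
open MeasureTheory ProbabilityTheory Finset
open scoped ENNReal

/-- One round of the Dym–Luks ball-and-cell game: given the set `S` of remaining balls and a
placement `f` of the balls into the `n` cells, the balls remaining afterwards are those
members of `S` that are not sole occupants of their cell (sole occupants are captured). -/
def remainingBalls (r n : ℕ) (S : Finset (Fin r)) (f : Fin r → Fin n) : Finset (Fin r) :=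
  S.filter (fun b => ∃ b' ∈ S, b' ≠ b ∧ f b' = f b)

/-- The set of balls still in play after `k` rounds, starting from `r` balls, where
`ω k : Fin r → Fin n` is the placement of the balls used in round `k`. -/
def gameState (r n : ℕ) (ω : ℕ → Fin r → Fin n) : ℕ → Finset (Fin r)
  | 0 => Finset.univ
  | k + 1 => remainingBalls r n (gameState r n ω k) (ω k)

/-- The duration of the game: the first time at which no balls remain. -/
noncomputable def gameDuration (r n : ℕ) (ω : ℕ → Fin r → Fin n) : ℕ :=
  sInf {k | gameState r n ω k = ∅}

namespace BG

local instance : MeasurableSpace (Finset (Fin 3)) := ⊤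
local instance : DiscreteMeasurableSpace (Finset (Fin 3)) :=
  ⟨fun _ => MeasurableSpace.measurableSet_top⟩

variable {n : ℕ}

lemma exists_fin3 (P : Fin 3 → Prop) : (∃ b : Fin 3, P b) ↔ P 0 ∨ P 1 ∨ P 2 := by
  constructor
  · rintro ⟨b, hb⟩; fin_cases b <;> tauto
  · rintro (h|h|h) <;> exact ⟨_, h⟩

lemma remaining_subset (S : Finset (Fin 3)) (f : Fin 3 → Fin n) :
    remainingBalls 3 n S f ⊆ S := filter_subset _ _

lemma remaining_empty (f : Fin 3 → Fin n) : remainingBalls 3 n ∅ f = ∅ := by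
  simp [remainingBalls]

lemma remaining_ne_singleton (S : Finset (Fin 3)) (f : Fin 3 → Fin n) (a : Fin 3) :
    remainingBalls 3 n S f ≠ {a} := by
  intro h
  have ha : a ∈ remainingBalls 3 n S f := h ▸ mem_singleton_self a
  simp only [remainingBalls, mem_filter] at ha
  obtain ⟨haS, b', hb'S, hne, hfb⟩ := ha
  have hb' : b' ∈ remainingBalls 3 n S f := by
    simp only [remainingBalls, mem_filter]
    exact ⟨hb'S, a, haS, hne.symm, hfb.symm⟩
  rw [h, mem_singleton] at hb'
  exact hne hb'

lemma remaining_pair (a b : Fin 3) (hab : a ≠ b) (f : Fin 3 → Fin n) :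
    remainingBalls 3 n {a, b} f = if f a = f b then {a, b} else ∅ := by
  unfold remainingBalls
  split_ifs with h
  · ext x
    simp only [mem_filter, mem_insert, mem_singleton]
    constructor
    · tauto
    · rintro (rfl | rfl)
      · exact ⟨Or.inl rfl, b, Or.inr rfl, hab.symm, h.symm⟩
      · exact ⟨Or.inr rfl, a, Or.inl rfl, hab, h⟩
  · ext x
    simp only [mem_filter, mem_insert, mem_singleton, notMem_empty, iff_false, not_and]
    rintro (rfl | rfl) ⟨y, hy, hne, hf⟩ <;> rcases hy with rfl | rfl <;>
      first
        | exact hne rfl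
        | exact h hf
        | exact h hf.symm

lemma remaining_univ (f : Fin 3 → Fin n) :
    remainingBalls 3 n Finset.univ f =
      if f 0 = f 1 ∧ f 1 = f 2 then Finset.univ
      else if f 0 = f 1 then {0, 1}
      else if f 0 = f 2 then {0, 2}
      else if f 1 = f 2 then {1, 2}
      else ∅ := by
  ext x
  fin_cases x <;>
    simp only [remainingBalls, mem_filter, mem_univ, true_and, exists_fin3] <;>
    split_ifs <;>
    simp_all [Fin.ext_iff] <;>
    omega

lemma ru_univ (f : Fin 3 → Fin n) :
    remainingBalls 3 n Finset.univ f = Finset.univ ↔ (f 0 = f 1 ∧ f 1 = f 2) := by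
  rw [remaining_univ]; split_ifs <;> simp_all <;> decide

lemma ru_01 (f : Fin 3 → Fin n) :
    remainingBalls 3 n Finset.univ f = {0, 1} ↔ (f 0 = f 1 ∧ ¬ f 1 = f 2) := by
  rw [remaining_univ]; split_ifs <;> simp_all <;> decide

lemma ru_02 (f : Fin 3 → Fin n) :
    remainingBalls 3 n Finset.univ f = {0, 2} ↔ (¬ f 0 = f 1 ∧ f 0 = f 2) := by
  rw [remaining_univ]; split_ifs <;> simp_all <;> decide

lemma ru_12 (f : Fin 3 → Fin n) :
    remainingBalls 3 n Finset.univ f = {1, 2} ↔ (¬ f 0 = f 1 ∧ ¬ f 0 = f 2 ∧ f 1 = f 2) := by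
  rw [remaining_univ]; split_ifs <;> simp_all <;> decide

lemma card_cc : (univ.filter fun g : Fin 3 → Fin n => g 0 = g 1 ∧ g 1 = g 2).card = n := by
  have : (univ.filter fun g : Fin 3 → Fin n => g 0 = g 1 ∧ g 1 = g 2).card
      = (univ : Finset (Fin n)).card := by
    refine card_nbij' (fun g => g 0) (fun x => ![x, x, x]) ?_ ?_ ?_ ?_
    · intro a _; exact mem_univ _
    · intro x _; simp [mem_filter]
    · intro g hg
      simp only [mem_coe, mem_filter, mem_univ, true_and] at hg
      funext x; fin_cases x <;> simp [hg.1, hg.2, ← hg.1, (hg.1.trans hg.2)]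
    · intro x _; simp
  simp [this, card_univ]

lemma card_od : ((univ : Finset (Fin n)).offDiag).card = n * (n - 1) := by
  rw [Finset.offDiag_card]
  simp only [card_univ, Fintype.card_fin]
  cases n with
  | zero => simp
  | succ m => simp [Nat.succ_sub_one]; ring_nf; omega

lemma card_c01 :
    (univ.filter fun g : Fin 3 → Fin n => g 0 = g 1 ∧ ¬ g 1 = g 2).card = n * (n - 1) := by
  rw [← card_od]
  refine card_nbij' (fun g => (g 0, g 2)) (fun p => ![p.1, p.1, p.2]) ?_ ?_ ?_ ?_
  · intro g hg
    simp only [mem_coe, mem_filter, mem_univ, true_and] at hg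
    simp only [mem_coe, Finset.mem_offDiag, mem_univ, true_and]
    exact fun h => hg.2 (hg.1.symm.trans h)
  · intro p hp
    simp only [mem_coe, Finset.mem_offDiag, mem_univ, true_and] at hp
    simp [mem_filter, hp]
  · intro g hg
    simp only [mem_coe, mem_filter, mem_univ, true_and] at hg
    funext x; fin_cases x <;> simp [hg.1]
  · intro p _; simp

lemma card_c02 :
    (univ.filter fun g : Fin 3 → Fin n => ¬ g 0 = g 1 ∧ g 0 = g 2).card = n * (n - 1) := by
  rw [← card_od]
  refine card_nbij' (fun g => (g 0, g 1)) (fun p => ![p.1, p.2, p.1]) ?_ ?_ ?_ ?_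
  · intro g hg
    simp only [mem_coe, mem_filter, mem_univ, true_and] at hg
    simp only [mem_coe, Finset.mem_offDiag, mem_univ, true_and]
    exact hg.1
  · intro p hp
    simp only [mem_coe, Finset.mem_offDiag, mem_univ, true_and] at hp
    simp [mem_filter, hp]
  · intro g hg
    simp only [mem_coe, mem_filter, mem_univ, true_and] at hg
    funext x; fin_cases x <;> simp [hg.2]
  · intro p _; simp

lemma card_c12 :
    (univ.filter fun g : Fin 3 → Fin n =>
      ¬ g 0 = g 1 ∧ ¬ g 0 = g 2 ∧ g 1 = g 2).card = n * (n - 1) := by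
  rw [← card_od]
  refine card_nbij' (fun g => (g 1, g 0)) (fun p => ![p.2, p.1, p.1]) ?_ ?_ ?_ ?_
  · intro g hg
    simp only [mem_coe, mem_filter, mem_univ, true_and] at hg
    simp only [mem_coe, Finset.mem_offDiag, mem_univ, true_and]
    exact fun h => hg.1 h.symm
  · intro p hp
    simp only [mem_coe, Finset.mem_offDiag, mem_univ, true_and] at hp
    simp only [mem_coe, mem_filter, mem_univ, true_and, Matrix.cons_val_zero, Matrix.cons_val_one,
      Matrix.head_cons, Matrix.cons_val_two, Matrix.tail_cons]
    refine ⟨fun h => hp h.symm, fun h => hp h.symm, ?_⟩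
    trivial
  · intro g hg
    simp only [mem_coe, mem_filter, mem_univ, true_and] at hg
    funext x; fin_cases x <;> simp [hg.2.2]
  · intro p _; simp

lemma card_p01 : (univ.filter fun g : Fin 3 → Fin n => g 0 = g 1).card = n * n := by
  have : (univ.filter fun g : Fin 3 → Fin n => g 0 = g 1).card
      = ((univ : Finset (Fin n)) ×ˢ (univ : Finset (Fin n))).card := by
    refine card_nbij' (fun g => (g 0, g 2)) (fun p => ![p.1, p.1, p.2]) ?_ ?_ ?_ ?_
    · intro g _; simp
    · intro p _; simp [mem_filter]
    · intro g hg
      simp only [mem_coe, mem_filter, mem_univ, true_and] at hg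
      funext x; fin_cases x <;> simp [hg]
    · intro p _; simp
  simp [this, card_univ]

lemma card_p02 : (univ.filter fun g : Fin 3 → Fin n => g 0 = g 2).card = n * n := by
  have : (univ.filter fun g : Fin 3 → Fin n => g 0 = g 2).card
      = ((univ : Finset (Fin n)) ×ˢ (univ : Finset (Fin n))).card := by
    refine card_nbij' (fun g => (g 0, g 1)) (fun p => ![p.1, p.2, p.1]) ?_ ?_ ?_ ?_
    · intro g _; simp
    · intro p _; simp [mem_filter]
    · intro g hg
      simp only [mem_coe, mem_filter, mem_univ, true_and] at hg
      funext x; fin_cases x <;> simp [hg]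
    · intro p _; simp
  simp [this, card_univ]

lemma card_p12 : (univ.filter fun g : Fin 3 → Fin n => g 1 = g 2).card = n * n := by
  have : (univ.filter fun g : Fin 3 → Fin n => g 1 = g 2).card
      = ((univ : Finset (Fin n)) ×ˢ (univ : Finset (Fin n))).card := by
    refine card_nbij' (fun g => (g 1, g 0)) (fun p => ![p.2, p.1, p.1]) ?_ ?_ ?_ ?_
    · intro g _; simp
    · intro p _; simp [mem_filter]
    · intro g hg
      simp only [mem_coe, mem_filter, mem_univ, true_and] at hg
      funext x; fin_cases x <;> simp [hg]
    · intro p _; simp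
  simp [this, card_univ]

/-! ### Measurability and independence -/

lemma gameState_congr {ω ω' : ℕ → Fin 3 → Fin n} (k : ℕ) (h : ∀ i < k, ω i = ω' i) :
    gameState 3 n ω k = gameState 3 n ω' k := by
  induction k with
  | zero => rfl
  | succ k ih =>
    show remainingBalls _ _ _ _ = remainingBalls _ _ _ _
    rw [ih fun i hi => h i (hi.trans (Nat.lt_succ_self k)), h k (Nat.lt_succ_self k)]

lemma measurable_state (k : ℕ) :
    Measurable (fun ω : ℕ → Fin 3 → Fin n => gameState 3 n ω k) := by
  induction k with
  | zero => exact measurable_const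
  | succ k ih =>
    have : (fun ω : ℕ → Fin 3 → Fin n => gameState 3 n ω (k + 1))
        = (fun p : Finset (Fin 3) × (Fin 3 → Fin n) => remainingBalls 3 n p.1 p.2)
          ∘ (fun ω => (gameState 3 n ω k, ω k)) := rfl
    rw [this]
    exact Measurable.of_discrete.comp (ih.prodMk (measurable_pi_apply k))

lemma measurableSet_state (k : ℕ) (S : Finset (Fin 3)) :
    MeasurableSet {ω : ℕ → Fin 3 → Fin n | gameState 3 n ω k = S} :=
  measurable_state k (MeasurableSet.of_discrete (s := {S}))

lemma measurableSet_placement (k : ℕ) (A : Finset (Fin 3 → Fin n)) :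
    MeasurableSet {ω : ℕ → Fin 3 → Fin n | ω k ∈ A} :=
  measurable_pi_apply k (MeasurableSet.of_discrete (s := (A : Set (Fin 3 → Fin n))))

variable (μ : Measure (ℕ → Fin 3 → Fin n))

lemma indepFun_state (hpos : 0 < n)
    (hindep : iIndepFun (fun k (ω : ℕ → Fin 3 → Fin n) => ω k) μ)
    (k : ℕ) :
    IndepFun (fun ω => gameState 3 n ω k) (fun ω => ω k) μ := by
  have hd : Disjoint (Finset.range k) ({k} : Finset ℕ) := by simp
  have h := hindep.indepFun_finset (Finset.range k) {k} hd (fun i => measurable_pi_apply i)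
  let d : Fin 3 → Fin n := fun _ => ⟨0, hpos⟩
  let Φ : (↥(Finset.range k) → (Fin 3 → Fin n)) → Finset (Fin 3) :=
    fun v => gameState 3 n (fun i => if h : i ∈ Finset.range k then v ⟨i, h⟩ else d) k
  let Ψ : (↥({k} : Finset ℕ) → (Fin 3 → Fin n)) → (Fin 3 → Fin n) :=
    fun v => v ⟨k, mem_singleton_self k⟩
  have h2 := h.comp (φ := Φ) (ψ := Ψ) Measurable.of_discrete Measurable.of_discrete
  have e1 : (Φ ∘ fun (ω : ℕ → Fin 3 → Fin n) (i : ↥(Finset.range k)) => ω i)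
      = fun ω => gameState 3 n ω k := by
    funext ω
    exact gameState_congr k fun i hi => by
      simp [Finset.mem_range.mpr hi]
  have e2 : (Ψ ∘ fun (ω : ℕ → Fin 3 → Fin n) (i : ↥({k} : Finset ℕ)) => ω i)
      = fun ω => ω k := rfl
  rwa [e1, e2] at h2

lemma measure_state_inter (hpos : 0 < n)
    (hindep : iIndepFun (fun k (ω : ℕ → Fin 3 → Fin n) => ω k) μ)
    (k : ℕ) (S : Finset (Fin 3)) (A : Finset (Fin 3 → Fin n)) :
    μ ({ω | gameState 3 n ω k = S} ∩ {ω | ω k ∈ A})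
      = μ {ω | gameState 3 n ω k = S} * μ {ω | ω k ∈ A} := by
  have h := (indepFun_state μ hpos hindep k).measure_inter_preimage_eq_mul
    {S} (A : Set (Fin 3 → Fin n)) (MeasurableSet.of_discrete) (MeasurableSet.of_discrete)
  simpa [Set.preimage, Set.mem_singleton_iff] using h

lemma measure_placement
    (hunif : ∀ (k : ℕ) (g : Fin 3 → Fin n), μ {ω | ω k = g} = ((n : ENNReal) ^ 3)⁻¹)
    (k : ℕ) (A : Finset (Fin 3 → Fin n)) :
    μ {ω | ω k ∈ A} = A.card * ((n : ENNReal) ^ 3)⁻¹ := by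
  have hset : {ω : ℕ → Fin 3 → Fin n | ω k ∈ A} = ⋃ g ∈ A, {ω | ω k = g} := by
    ext ω; simp
  rw [hset, measure_biUnion_finset]
  · rw [Finset.sum_congr rfl fun g _ => hunif k g, Finset.sum_const, nsmul_eq_mul]
  · intro g hg g' hg' hne
    simp only [Function.onFun]
    refine Set.disjoint_left.2 fun ω h1 h2 => hne ?_
    rw [← h1, ← h2]
  · intro g _
    have := measurableSet_placement k {g}
    simpa using this

/-! ### ENNReal arithmetic helpers -/

lemma npow_ne_zero (hpos : 0 < n) (p : ℕ) : ((n : ℝ≥0∞)) ^ p ≠ 0 :=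
  pow_ne_zero _ (by exact_mod_cast hpos.ne')

lemma npow_ne_top (p : ℕ) : ((n : ℝ≥0∞)) ^ p ≠ ⊤ :=
  ENNReal.pow_ne_top (ENNReal.natCast_ne_top n)

lemma div_helper (hpos : 0 < n) {a b p q : ℕ} (h : a * n ^ q = b * n ^ p) :
    (a : ℝ≥0∞) / (n : ℝ≥0∞) ^ p = (b : ℝ≥0∞) / (n : ℝ≥0∞) ^ q := by
  rw [ENNReal.div_eq_div_iff (npow_ne_zero hpos q) (npow_ne_top q)
    (npow_ne_zero hpos p) (npow_ne_top p)]
  have : ((a * n ^ q : ℕ) : ℝ≥0∞) = ((b * n ^ p : ℕ) : ℝ≥0∞) := by rw [h]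
  push_cast at this
  rw [mul_comm ((n : ℝ≥0∞) ^ q) _, mul_comm ((n : ℝ≥0∞) ^ p) _]
  exact this

lemma mul_div_helper (hpos : 0 < n) (a b p q : ℕ) :
    ((a : ℝ≥0∞) / (n : ℝ≥0∞) ^ p) * ((b : ℝ≥0∞) / (n : ℝ≥0∞) ^ q)
      = ((a * b : ℕ) : ℝ≥0∞) / (n : ℝ≥0∞) ^ (p + q) := by
  rw [div_eq_mul_inv, div_eq_mul_inv, div_eq_mul_inv, pow_add,
    ENNReal.mul_inv (Or.inl (npow_ne_zero hpos p)) (Or.inl (npow_ne_top p))]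
  push_cast
  ring

lemma div_add_same (a b p : ℕ) :
    ((a : ℝ≥0∞) / (n : ℝ≥0∞) ^ p) + ((b : ℝ≥0∞) / (n : ℝ≥0∞) ^ p)
      = ((a + b : ℕ) : ℝ≥0∞) / (n : ℝ≥0∞) ^ p := by
  rw [ENNReal.div_add_div_same]
  push_cast
  ring_nf

/-! ### Closed forms for the state distribution -/

lemma measure_univ_closed [IsProbabilityMeasure μ] (hn : 2 ≤ n)
    (hindep : iIndepFun (fun k (ω : ℕ → Fin 3 → Fin n) => ω k) μ)
    (hunif : ∀ (k : ℕ) (g : Fin 3 → Fin n), μ {ω | ω k = g} = ((n : ENNReal) ^ 3)⁻¹) :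
    ∀ k, μ {ω | gameState 3 n ω k = Finset.univ} = 1 / (n : ℝ≥0∞) ^ (2 * k) := by
  have hpos : 0 < n := by omega
  intro k
  induction k with
  | zero =>
    have hs : {ω : ℕ → Fin 3 → Fin n | gameState 3 n ω 0 = Finset.univ} = Set.univ := by
      ext ω; simp [gameState]
    simp [hs]
  | succ k ih =>
    have hset : {ω : ℕ → Fin 3 → Fin n | gameState 3 n ω (k + 1) = Finset.univ}
        = {ω | gameState 3 n ω k = Finset.univ}
          ∩ {ω | ω k ∈ univ.filter fun g : Fin 3 → Fin n => g 0 = g 1 ∧ g 1 = g 2} := by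
      ext ω
      simp only [Set.mem_inter_iff, Set.mem_setOf_eq, mem_filter, mem_univ, true_and]
      constructor
      · intro h
        have hsub : Finset.univ ⊆ gameState 3 n ω k := by
          rw [← h]; exact remaining_subset _ _
        have hk : gameState 3 n ω k = Finset.univ := Finset.univ_subset_iff.mp hsub
        refine ⟨hk, ?_⟩
        have hr : remainingBalls 3 n Finset.univ (ω k) = Finset.univ :=
          calc remainingBalls 3 n Finset.univ (ω k)
              = remainingBalls 3 n (gameState 3 n ω k) (ω k) := by rw [hk]
            _ = Finset.univ := h
        exact (ru_univ (ω k)).mp hr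
      · rintro ⟨hk, hc⟩
        show remainingBalls 3 n (gameState 3 n ω k) (ω k) = Finset.univ
        rw [hk]
        exact (ru_univ (ω k)).mpr hc
    rw [hset, measure_state_inter μ hpos hindep, ih, measure_placement μ hunif, card_cc]
    rw [show ((n : ℝ≥0∞) ^ 3)⁻¹ = ((n : ℝ≥0∞) ^ 3)⁻¹ from rfl]
    have : ((n : ℕ) : ℝ≥0∞) * ((n : ℝ≥0∞) ^ 3)⁻¹ = ((n : ℕ) : ℝ≥0∞) / (n : ℝ≥0∞) ^ 3 :=
      (div_eq_mul_inv _ _).symm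
    rw [this, show ((1 : ℝ≥0∞)) = ((1 : ℕ) : ℝ≥0∞) by norm_num, mul_div_helper hpos,
      div_helper hpos (a := 1 * n) (b := 1) (p := 2 * k + 3) (q := 2 * (k + 1)) (by ring)]

lemma measure_pair_closed [IsProbabilityMeasure μ] (hn : 2 ≤ n)
    (hindep : iIndepFun (fun k (ω : ℕ → Fin 3 → Fin n) => ω k) μ)
    (hunif : ∀ (k : ℕ) (g : Fin 3 → Fin n), μ {ω | ω k = g} = ((n : ENNReal) ^ 3)⁻¹)
    (a b : Fin 3)
    (hcover : ∀ S : Finset (Fin 3), {a, b} ⊆ S → S = {a, b} ∨ S = Finset.univ)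
    (hne : ({a, b} : Finset (Fin 3)) ≠ Finset.univ)
    (hcard1 : (univ.filter fun g : Fin 3 → Fin n =>
        remainingBalls 3 n Finset.univ g = {a, b}).card = n * (n - 1))
    (hcard2 : (univ.filter fun g : Fin 3 → Fin n =>
        remainingBalls 3 n ({a, b} : Finset (Fin 3)) g = {a, b}).card = n * n) :
    ∀ k, μ {ω | gameState 3 n ω k = ({a, b} : Finset (Fin 3))}
      = ((n ^ k - 1 : ℕ) : ℝ≥0∞) / (n : ℝ≥0∞) ^ (2 * k) := by
  have hpos : 0 < n := by omega
  intro k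
  induction k with
  | zero =>
    have hs : {ω : ℕ → Fin 3 → Fin n | gameState 3 n ω 0 = ({a, b} : Finset (Fin 3))} = ∅ := by
      ext ω
      simp only [Set.mem_empty_iff_false, iff_false, Set.mem_setOf_eq]
      intro h
      exact hne h.symm
    simp [hs]
  | succ k ih =>
    have hset : {ω : ℕ → Fin 3 → Fin n | gameState 3 n ω (k + 1) = ({a, b} : Finset (Fin 3))}
        = ({ω | gameState 3 n ω k = Finset.univ}
            ∩ {ω | ω k ∈ univ.filter fun g : Fin 3 → Fin n =>
                remainingBalls 3 n Finset.univ g = {a, b}})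
          ∪ ({ω | gameState 3 n ω k = ({a, b} : Finset (Fin 3))}
            ∩ {ω | ω k ∈ univ.filter fun g : Fin 3 → Fin n =>
                remainingBalls 3 n ({a, b} : Finset (Fin 3)) g = {a, b}}) := by
      ext ω
      simp only [Set.mem_union, Set.mem_inter_iff, Set.mem_setOf_eq, mem_filter, mem_univ,
        true_and]
      constructor
      · intro h
        have hsub : ({a, b} : Finset (Fin 3)) ⊆ gameState 3 n ω k := by
          rw [← h]; exact remaining_subset _ _
        rcases hcover _ hsub with hk | hk
        · right
          refine ⟨hk, ?_⟩
          calc remainingBalls 3 n ({a, b} : Finset (Fin 3)) (ω k)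
              = remainingBalls 3 n (gameState 3 n ω k) (ω k) := by rw [hk]
            _ = ({a, b} : Finset (Fin 3)) := h
        · left
          refine ⟨hk, ?_⟩
          calc remainingBalls 3 n Finset.univ (ω k)
              = remainingBalls 3 n (gameState 3 n ω k) (ω k) := by rw [hk]
            _ = ({a, b} : Finset (Fin 3)) := h
      · rintro (⟨hk, hc⟩ | ⟨hk, hc⟩) <;>
        · show remainingBalls 3 n (gameState 3 n ω k) (ω k) = _
          rw [hk]
          exact hc
    have hdisj : Disjoint
        ({ω : ℕ → Fin 3 → Fin n | gameState 3 n ω k = Finset.univ}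
          ∩ {ω | ω k ∈ univ.filter fun g : Fin 3 → Fin n =>
              remainingBalls 3 n Finset.univ g = {a, b}})
        ({ω | gameState 3 n ω k = ({a, b} : Finset (Fin 3))}
          ∩ {ω | ω k ∈ univ.filter fun g : Fin 3 → Fin n =>
              remainingBalls 3 n ({a, b} : Finset (Fin 3)) g = {a, b}}) := by
      refine Set.disjoint_left.2 fun ω h1 h2 => ?_
      exact hne (h2.1.symm.trans h1.1)
    rw [hset, measure_union hdisj
      ((measurableSet_state k _).inter (measurableSet_placement k _)),
      measure_state_inter μ hpos hindep, measure_state_inter μ hpos hindep,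
      measure_placement μ hunif, measure_placement μ hunif,
      measure_univ_closed μ hn hindep hunif, ih, hcard1, hcard2]
    have e1 : ((1 : ℝ≥0∞)) = ((1 : ℕ) : ℝ≥0∞) := by norm_num
    rw [show ((n * (n - 1) : ℕ) : ℝ≥0∞) * ((n : ℝ≥0∞) ^ 3)⁻¹
        = ((n * (n - 1) : ℕ) : ℝ≥0∞) / (n : ℝ≥0∞) ^ 3 from (div_eq_mul_inv _ _).symm,
      show ((n * n : ℕ) : ℝ≥0∞) * ((n : ℝ≥0∞) ^ 3)⁻¹
        = ((n * n : ℕ) : ℝ≥0∞) / (n : ℝ≥0∞) ^ 3 from (div_eq_mul_inv _ _).symm,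
      e1, mul_div_helper hpos, mul_div_helper hpos, div_add_same]
    have h1 : 1 ≤ n := hpos
    have h2 : 1 ≤ n ^ k := Nat.one_le_pow _ _ hpos
    have h3 : 1 ≤ n ^ (k + 1) := Nat.one_le_pow _ _ hpos
    refine div_helper hpos ?_
    have key : 1 * (n * (n - 1)) + (n ^ k - 1) * (n * n) = (n ^ (k + 1) - 1) * n := by
      have hp : n ^ (k + 1) = n ^ k * n := pow_succ n k
      zify [h1, h2, h3]
      rw [pow_succ]
      ring
    rw [key, show 2 * (k + 1) = 2 * k + 2 by ring, mul_assoc, ← pow_succ']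

lemma rp_eq (a b : Fin 3) (hab : a ≠ b) (f : Fin 3 → Fin n) :
    remainingBalls 3 n {a, b} f = ({a, b} : Finset (Fin 3)) ↔ f a = f b := by
  rw [remaining_pair a b hab]
  split_ifs with h
  · simp [h]
  · exact iff_of_false (fun hh => Finset.insert_ne_empty a {b} hh.symm) h

lemma state_ne_singleton (ω : ℕ → Fin 3 → Fin n) (k : ℕ) (a : Fin 3) :
    gameState 3 n ω k ≠ {a} := by
  cases k with
  | zero =>
    intro h
    have h' : (Finset.univ : Finset (Fin 3)) = {a} := h
    simpa using congrArg Finset.card h'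
  | succ k => exact remaining_ne_singleton _ _ _

lemma state_split (k : ℕ) : {ω : ℕ → Fin 3 → Fin n | gameState 3 n ω k ≠ ∅}
    = {ω | gameState 3 n ω k = Finset.univ}
      ∪ ({ω | gameState 3 n ω k = ({0, 1} : Finset (Fin 3))}
        ∪ ({ω | gameState 3 n ω k = ({0, 2} : Finset (Fin 3))}
          ∪ {ω | gameState 3 n ω k = ({1, 2} : Finset (Fin 3))})) := by
  have dec : ∀ S : Finset (Fin 3), S ≠ {0} → S ≠ {1} → S ≠ {2} → S ≠ ∅ →
      S = Finset.univ ∨ S = {0, 1} ∨ S = {0, 2} ∨ S = {1, 2} := by decide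
  ext ω
  simp only [Set.mem_setOf_eq, Set.mem_union]
  constructor
  · intro h
    exact dec _ (state_ne_singleton ω k 0) (state_ne_singleton ω k 1)
      (state_ne_singleton ω k 2) h
  · rintro (h | h | h | h) <;> rw [h] <;> decide

section Pairs
variable [IsProbabilityMeasure μ] (hn : 2 ≤ n)
  (hindep : iIndepFun (fun k (ω : ℕ → Fin 3 → Fin n) => ω k) μ)
  (hunif : ∀ (k : ℕ) (g : Fin 3 → Fin n), μ {ω | ω k = g} = ((n : ENNReal) ^ 3)⁻¹)

include hn hindep hunif

lemma measure_pair01 :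
    ∀ k, μ {ω | gameState 3 n ω k = ({0, 1} : Finset (Fin 3))}
      = ((n ^ k - 1 : ℕ) : ℝ≥0∞) / (n : ℝ≥0∞) ^ (2 * k) := by
  refine measure_pair_closed μ hn hindep hunif 0 1 (by decide) (by decide) ?_ ?_
  · simp_rw [ru_01]; exact card_c01
  · simp_rw [rp_eq 0 1 (by decide)]; exact card_p01

lemma measure_pair02 :
    ∀ k, μ {ω | gameState 3 n ω k = ({0, 2} : Finset (Fin 3))}
      = ((n ^ k - 1 : ℕ) : ℝ≥0∞) / (n : ℝ≥0∞) ^ (2 * k) := by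
  refine measure_pair_closed μ hn hindep hunif 0 2 (by decide) (by decide) ?_ ?_
  · simp_rw [ru_02]; exact card_c02
  · simp_rw [rp_eq 0 2 (by decide)]; exact card_p02

lemma measure_pair12 :
    ∀ k, μ {ω | gameState 3 n ω k = ({1, 2} : Finset (Fin 3))}
      = ((n ^ k - 1 : ℕ) : ℝ≥0∞) / (n : ℝ≥0∞) ^ (2 * k) := by
  refine measure_pair_closed μ hn hindep hunif 1 2 (by decide) (by decide) ?_ ?_
  · simp_rw [ru_12]; exact card_c12
  · simp_rw [rp_eq 1 2 (by decide)]; exact card_p12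


lemma measure_ne_empty (k : ℕ) :
    μ {ω | gameState 3 n ω k ≠ ∅}
      = ((3 * n ^ k - 2 : ℕ) : ℝ≥0∞) / (n : ℝ≥0∞) ^ (2 * k) := by
  have hpos : 0 < n := by omega
  have hdisj : ∀ (S T : Finset (Fin 3)), S ≠ T →
      Disjoint {ω : ℕ → Fin 3 → Fin n | gameState 3 n ω k = S}
        {ω | gameState 3 n ω k = T} := by
    intro S T hST
    exact Set.disjoint_left.2 fun ω h1 h2 => hST (h1.symm.trans h2)
  rw [state_split k]
  rw [measure_union ?d1 ?m1]
  case d1 =>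
    refine Set.disjoint_union_right.2 ⟨hdisj _ _ (by decide), ?_⟩
    exact Set.disjoint_union_right.2 ⟨hdisj _ _ (by decide), hdisj _ _ (by decide)⟩
  case m1 =>
    exact ((measurableSet_state k _).union ((measurableSet_state k _).union
      (measurableSet_state k _)))
  rw [measure_union (Set.disjoint_union_right.2 ⟨hdisj _ _ (by decide), hdisj _ _ (by decide)⟩)
    ((measurableSet_state k _).union (measurableSet_state k _))]
  rw [measure_union (hdisj _ _ (by decide)) (measurableSet_state k _)]
  rw [measure_univ_closed μ hn hindep hunif, measure_pair01 μ hn hindep hunif,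
    measure_pair02 μ hn hindep hunif, measure_pair12 μ hn hindep hunif]
  rw [show (1 : ℝ≥0∞) = ((1 : ℕ) : ℝ≥0∞) by norm_num, div_add_same, div_add_same, div_add_same]
  have h2 : 1 ≤ n ^ k := Nat.one_le_pow _ _ hpos
  congr 1
  rw [show 1 + (n ^ k - 1 + (n ^ k - 1 + (n ^ k - 1))) = 3 * n ^ k - 2 from by omega]

end Pairs

/-! ### The game duration -/

lemma state_absorb (ω : ℕ → Fin 3 → Fin n) {j k : ℕ} (h : j ≤ k)
    (hj : gameState 3 n ω j = ∅) : gameState 3 n ω k = ∅ := by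
  induction k with
  | zero => exact (Nat.le_zero.mp h) ▸ hj
  | succ k ih =>
    by_cases hc : j = k + 1
    · exact hc ▸ hj
    · have hjk : j ≤ k := by omega
      show remainingBalls 3 n (gameState 3 n ω k) (ω k) = ∅
      rw [ih hjk]
      exact remaining_empty _

lemma gt_sub1 (k : ℕ) :
    {ω : ℕ → Fin 3 → Fin n | k < gameDuration 3 n ω} ⊆ {ω | gameState 3 n ω k ≠ ∅} := by
  intro ω h hk
  exact absurd (Nat.sInf_le hk : gameDuration 3 n ω ≤ k) (not_le.mpr h)

lemma gt_sub2 (k : ℕ) :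
    {ω : ℕ → Fin 3 → Fin n | gameState 3 n ω k ≠ ∅}
      ⊆ {ω | k < gameDuration 3 n ω} ∪ {ω | ∀ j, gameState 3 n ω j ≠ ∅} := by
  intro ω h
  by_cases hall : ∀ j, gameState 3 n ω j ≠ ∅
  · exact Or.inr hall
  · left
    push_neg at hall
    obtain ⟨j, hj⟩ := hall
    rw [Set.mem_setOf_eq]
    by_contra hk
    push_neg at hk
    have hmem : gameState 3 n ω (gameDuration 3 n ω) = ∅ := by
      have := Nat.sInf_mem (⟨j, hj⟩ : Set.Nonempty {m | gameState 3 n ω m = ∅})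
      exact this
    exact h (state_absorb ω hk hmem)

lemma measurable_duration :
    Measurable (fun ω : ℕ → Fin 3 → Fin n => gameDuration 3 n ω) := by
  apply measurable_to_countable'
  intro k
  cases k with
  | zero =>
    have hs : (fun ω : ℕ → Fin 3 → Fin n => gameDuration 3 n ω) ⁻¹' {0}
        = {ω | gameState 3 n ω 0 = ∅} ∪ ⋂ j, {ω | gameState 3 n ω j = ∅}ᶜ := by
      ext ω
      simp only [Set.mem_preimage, Set.mem_singleton_iff, gameDuration, Nat.sInf_eq_zero,
        Set.mem_union, Set.mem_setOf_eq, Set.mem_iInter, Set.mem_compl_iff]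
      constructor
      · rintro (h | h)
        · exact Or.inl h
        · exact Or.inr fun j hj => Set.eq_empty_iff_forall_notMem.mp h j hj
      · rintro (h | h)
        · exact Or.inl h
        · exact Or.inr (Set.eq_empty_iff_forall_notMem.mpr h)
    rw [hs]
    exact (measurableSet_state 0 ∅).union
      (MeasurableSet.iInter fun j => (measurableSet_state j ∅).compl)
  | succ k =>
    have hs : (fun ω : ℕ → Fin 3 → Fin n => gameDuration 3 n ω) ⁻¹' {k + 1}
        = {ω | gameState 3 n ω (k + 1) = ∅}
          ∩ ⋂ j : Fin (k + 1), {ω | gameState 3 n ω (j : ℕ) = ∅}ᶜ := by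
      ext ω
      simp only [Set.mem_preimage, Set.mem_singleton_iff, Set.mem_inter_iff, Set.mem_setOf_eq,
        Set.mem_iInter, Set.mem_compl_iff]
      constructor
      · intro h
        have hne : {m | gameState 3 n ω m = ∅}.Nonempty := by
          by_contra hcon
          rw [Set.not_nonempty_iff_eq_empty] at hcon
          rw [gameDuration, hcon, Nat.sInf_empty] at h
          exact absurd h (by omega)
        have hmem : gameState 3 n ω (gameDuration 3 n ω) = ∅ := by
          have := Nat.sInf_mem hne
          exact this
        refine ⟨h ▸ hmem, fun j hj => ?_⟩
        have hlt : (j : ℕ) < gameDuration 3 n ω := by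
          rw [h]; exact j.isLt
        exact Nat.notMem_of_lt_sInf hlt hj
      · rintro ⟨h1, h2⟩
        have hle : gameDuration 3 n ω ≤ k + 1 := Nat.sInf_le h1
        have hge : ¬ gameDuration 3 n ω < k + 1 := by
          intro hlt
          have hmem : gameState 3 n ω (gameDuration 3 n ω) = ∅ := by
            have := Nat.sInf_mem (⟨k + 1, h1⟩ : Set.Nonempty {m | gameState 3 n ω m = ∅})
            exact this
          exact h2 ⟨gameDuration 3 n ω, hlt⟩ hmem
        omega
    rw [hs]
    exact (measurableSet_state (k + 1) ∅).inter
      (MeasurableSet.iInter fun j => (measurableSet_state (j : ℕ) ∅).compl)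

section Duration
variable [IsProbabilityMeasure μ] (hn : 2 ≤ n)
  (hindep : iIndepFun (fun k (ω : ℕ → Fin 3 → Fin n) => ω k) μ)
  (hunif : ∀ (k : ℕ) (g : Fin 3 → Fin n), μ {ω | ω k = g} = ((n : ENNReal) ^ 3)⁻¹)

include hn hindep hunif

lemma measure_never : μ {ω | ∀ j, gameState 3 n ω j ≠ ∅} = 0 := by
  have hpos : 0 < n := by omega
  have hbound : ∀ k : ℕ, μ {ω | ∀ j, gameState 3 n ω j ≠ ∅} ≤ 3 * ((n : ℝ≥0∞)⁻¹) ^ k := by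
    intro k
    have hsub : {ω : ℕ → Fin 3 → Fin n | ∀ j, gameState 3 n ω j ≠ ∅}
        ⊆ {ω | gameState 3 n ω k ≠ ∅} := fun ω h => h k
    refine (measure_mono hsub).trans ?_
    rw [measure_ne_empty μ hn hindep hunif k]
    have hle : ((3 * n ^ k - 2 : ℕ) : ℝ≥0∞) ≤ ((3 * n ^ k : ℕ) : ℝ≥0∞) := by
      exact_mod_cast Nat.sub_le _ _
    refine (ENNReal.div_le_div_right hle _).trans ?_
    rw [div_helper hpos (a := 3 * n ^ k) (p := 2 * k) (b := 3) (q := k)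
      (by rw [two_mul, pow_add]; ring)]
    rw [div_eq_mul_inv, ← ENNReal.inv_pow]
    norm_num
  have htend : Filter.Tendsto (fun k : ℕ => 3 * ((n : ℝ≥0∞)⁻¹) ^ k)
      Filter.atTop (nhds 0) := by
    have hr : (n : ℝ≥0∞)⁻¹ < 1 := by
      rw [ENNReal.inv_lt_one]
      exact_mod_cast (by omega : 1 < n)
    have h1 := ENNReal.tendsto_pow_atTop_nhds_zero_of_lt_one hr
    have h3 := ENNReal.Tendsto.const_mul h1 (Or.inr (by norm_num : (3 : ℝ≥0∞) ≠ ⊤))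
    simpa using h3
  have hle0 := ge_of_tendsto' htend hbound
  exact le_antisymm hle0 (zero_le)

lemma measure_gt (k : ℕ) :
    μ {ω | k < gameDuration 3 n ω}
      = ((3 * n ^ k - 2 : ℕ) : ℝ≥0∞) / (n : ℝ≥0∞) ^ (2 * k) := by
  rw [← measure_ne_empty μ hn hindep hunif k]
  apply le_antisymm
  · exact measure_mono (gt_sub1 k)
  · calc μ {ω | gameState 3 n ω k ≠ ∅}
        ≤ μ ({ω | k < gameDuration 3 n ω} ∪ {ω | ∀ j, gameState 3 n ω j ≠ ∅}) :=
          measure_mono (gt_sub2 k)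
      _ ≤ μ {ω | k < gameDuration 3 n ω} + μ {ω | ∀ j, gameState 3 n ω j ≠ ∅} :=
          measure_union_le _ _
      _ = μ {ω | k < gameDuration 3 n ω} := by
          rw [measure_never μ hn hindep hunif, add_zero]

end Duration

lemma lintegral_nat (f : (ℕ → Fin 3 → Fin n) → ℕ)
    (hms : ∀ k, MeasurableSet {ω : ℕ → Fin 3 → Fin n | k < f ω}) :
    ∫⁻ ω, (f ω : ℝ≥0∞) ∂μ = ∑' k, μ {ω | k < f ω} := by
  have h1 : ∀ ω, ((f ω : ℝ≥0∞))
      = ∑' k, Set.indicator {ω : ℕ → Fin 3 → Fin n | k < f ω}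
          (1 : (ℕ → Fin 3 → Fin n) → ℝ≥0∞) ω := by
    intro ω
    have hz : ∀ k ∉ Finset.range (f ω),
        Set.indicator {ω' : ℕ → Fin 3 → Fin n | k < f ω'}
          (1 : (ℕ → Fin 3 → Fin n) → ℝ≥0∞) ω = 0 := by
      intro k hk
      exact Set.indicator_of_notMem (s := {ω' : ℕ → Fin 3 → Fin n | k < f ω'}) (a := ω)
        (fun hlt => hk (Finset.mem_range.mpr hlt)) _
    rw [tsum_eq_sum hz]
    rw [Finset.sum_congr rfl fun k hk =>
      Set.indicator_of_mem (s := {ω' : ℕ → Fin 3 → Fin n | k < f ω'}) (a := ω)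
        (Finset.mem_range.mp hk) (1 : (ℕ → Fin 3 → Fin n) → ℝ≥0∞)]
    simp
  rw [lintegral_congr h1,
    lintegral_tsum fun k => ((measurable_one.indicator (hms k)).aemeasurable)]
  exact tsum_congr fun k => lintegral_indicator_one (hms k)

lemma sum_eval (hn : 2 ≤ n) :
    (∑' k : ℕ, ((3 * n ^ k - 2 : ℕ) : ℝ≥0∞) / (n : ℝ≥0∞) ^ (2 * k)).toReal
      = (n : ℝ) * ((n : ℝ) + 3) / ((n : ℝ) ^ 2 - 1) := by
  have hpos : 0 < n := by omega
  have hN1 : (1 : ℝ≥0∞) < (n : ℝ≥0∞) := by exact_mod_cast (by omega : 1 < n)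
  have hinv1 : ((n : ℝ≥0∞))⁻¹ < 1 := ENNReal.inv_lt_one.2 hN1
  have hinv2 : (((n : ℝ≥0∞)) ^ 2)⁻¹ < 1 :=
    ENNReal.inv_lt_one.2 (one_lt_pow₀ hN1 two_ne_zero)
  have key : ∀ k : ℕ, ((3 * n ^ k - 2 : ℕ) : ℝ≥0∞) / (n : ℝ≥0∞) ^ (2 * k)
      + ((2 : ℕ) : ℝ≥0∞) / (n : ℝ≥0∞) ^ (2 * k) = ((3 : ℕ) : ℝ≥0∞) / (n : ℝ≥0∞) ^ k := by
    intro k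
    rw [div_add_same]
    refine div_helper hpos ?_
    have h2 : 1 ≤ n ^ k := Nat.one_le_pow _ _ hpos
    rw [show 3 * n ^ k - 2 + 2 = 3 * n ^ k from by omega, two_mul, pow_add]
    ring
  have hsum2 : ∑' k : ℕ, ((2 : ℕ) : ℝ≥0∞) / (n : ℝ≥0∞) ^ (2 * k)
      = 2 * (1 - (((n : ℝ≥0∞)) ^ 2)⁻¹)⁻¹ := by
    have he : ∀ k : ℕ, ((2 : ℕ) : ℝ≥0∞) / (n : ℝ≥0∞) ^ (2 * k)
        = 2 * ((((n : ℝ≥0∞)) ^ 2)⁻¹) ^ k := by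
      intro k
      rw [div_eq_mul_inv, pow_mul, ← ENNReal.inv_pow]
      norm_num
    rw [tsum_congr he, ENNReal.tsum_mul_left, ENNReal.tsum_geometric]
  have hsum3 : ∑' k : ℕ, ((3 : ℕ) : ℝ≥0∞) / (n : ℝ≥0∞) ^ k
      = 3 * (1 - ((n : ℝ≥0∞))⁻¹)⁻¹ := by
    have he : ∀ k : ℕ, ((3 : ℕ) : ℝ≥0∞) / (n : ℝ≥0∞) ^ k = 3 * (((n : ℝ≥0∞))⁻¹) ^ k := by
      intro k
      rw [div_eq_mul_inv, ← ENNReal.inv_pow]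
      norm_num
    rw [tsum_congr he, ENNReal.tsum_mul_left, ENNReal.tsum_geometric]
  have hadd : (∑' k : ℕ, ((3 * n ^ k - 2 : ℕ) : ℝ≥0∞) / (n : ℝ≥0∞) ^ (2 * k))
      + 2 * (1 - (((n : ℝ≥0∞)) ^ 2)⁻¹)⁻¹ = 3 * (1 - ((n : ℝ≥0∞))⁻¹)⁻¹ := by
    rw [← hsum2, ← hsum3, ← ENNReal.tsum_add]
    exact tsum_congr key
  have hAne : (2 : ℝ≥0∞) * (1 - (((n : ℝ≥0∞)) ^ 2)⁻¹)⁻¹ ≠ ⊤ := by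
    refine ENNReal.mul_ne_top (by norm_num) ?_
    rw [Ne, ENNReal.inv_eq_top]
    exact (tsub_pos_iff_lt.mpr hinv2).ne'
  have hBne : (3 : ℝ≥0∞) * (1 - ((n : ℝ≥0∞))⁻¹)⁻¹ ≠ ⊤ := by
    refine ENNReal.mul_ne_top (by norm_num) ?_
    rw [Ne, ENNReal.inv_eq_top]
    exact (tsub_pos_iff_lt.mpr hinv1).ne'
  have hS : (∑' k : ℕ, ((3 * n ^ k - 2 : ℕ) : ℝ≥0∞) / (n : ℝ≥0∞) ^ (2 * k))
      = 3 * (1 - ((n : ℝ≥0∞))⁻¹)⁻¹ - 2 * (1 - (((n : ℝ≥0∞)) ^ 2)⁻¹)⁻¹ :=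
    ENNReal.eq_sub_of_add_eq hAne hadd
  have hle : (2 : ℝ≥0∞) * (1 - (((n : ℝ≥0∞)) ^ 2)⁻¹)⁻¹ ≤ 3 * (1 - ((n : ℝ≥0∞))⁻¹)⁻¹ := by
    calc (2 : ℝ≥0∞) * (1 - (((n : ℝ≥0∞)) ^ 2)⁻¹)⁻¹
        ≤ (∑' k : ℕ, ((3 * n ^ k - 2 : ℕ) : ℝ≥0∞) / (n : ℝ≥0∞) ^ (2 * k))
          + 2 * (1 - (((n : ℝ≥0∞)) ^ 2)⁻¹)⁻¹ := le_add_self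
      _ = _ := hadd
  rw [hS, ENNReal.toReal_sub_of_le hle hBne, ENNReal.toReal_mul, ENNReal.toReal_mul,
    ENNReal.toReal_inv, ENNReal.toReal_inv,
    ENNReal.toReal_sub_of_le hinv1.le ENNReal.one_ne_top,
    ENNReal.toReal_sub_of_le hinv2.le ENNReal.one_ne_top,
    ENNReal.toReal_inv, ENNReal.toReal_inv, ENNReal.toReal_one, ENNReal.toReal_pow,
    ENNReal.toReal_natCast, ENNReal.toReal_ofNat, ENNReal.toReal_ofNat]
  have h1 : (1 : ℝ) < (n : ℝ) := by exact_mod_cast (by omega : 1 < n)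
  have h0 : (n : ℝ) ≠ 0 := by positivity
  have ha : (1 : ℝ) - ((n : ℝ))⁻¹ ≠ 0 := by
    rw [sub_ne_zero]
    intro h
    rw [eq_comm, inv_eq_one] at h
    linarith
  have hb : (1 : ℝ) - (((n : ℝ)) ^ 2)⁻¹ ≠ 0 := by
    rw [sub_ne_zero]
    intro h
    rw [eq_comm, inv_eq_one] at h
    nlinarith
  have hc : (n : ℝ) ^ 2 - 1 ≠ 0 := by nlinarith
  have hd : (n : ℝ) - 1 ≠ 0 := by nlinarith
  have hd' : (-1 : ℝ) + (n : ℝ) ≠ 0 := by nlinarith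
  have he : (n : ℝ) + 1 ≠ 0 := by nlinarith
  field_simp
  ring

end BG

/-- In the ball-and-cell game with `n ≥ 2` cells and `3` balls (each round
every remaining ball is placed independently uniformly at random into one of the `n` cells,
sole occupants are captured, rounds independent), the expected duration equals
`n(n+3)/(n²−1)`. -/
theorem ball_cell_three_balls_expected_duration (n : ℕ) (hn : 2 ≤ n)
    (μ : Measure (ℕ → Fin 3 → Fin n)) [IsProbabilityMeasure μ]
    (hindep : iIndepFun (fun k ω => ω k) μ)
    (hunif : ∀ (k : ℕ) (g : Fin 3 → Fin n), μ {ω | ω k = g} = ((n : ENNReal) ^ 3)⁻¹) :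
    ∫ ω, (gameDuration 3 n ω : ℝ) ∂μ = (n : ℝ) * ((n : ℝ) + 3) / ((n : ℝ) ^ 2 - 1) := by
  have hT : Measurable (fun ω : ℕ → Fin 3 → Fin n => gameDuration 3 n ω) :=
    BG.measurable_duration
  have hTR : Measurable (fun ω : ℕ → Fin 3 → Fin n => (gameDuration 3 n ω : ℝ)) :=
    Measurable.comp measurable_from_top hT
  rw [MeasureTheory.integral_eq_lintegral_of_nonneg_ae
    (Filter.Eventually.of_forall fun ω => Nat.cast_nonneg _) hTR.aestronglyMeasurable]
  rw [lintegral_congr fun ω => ENNReal.ofReal_natCast (gameDuration 3 n ω)]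
  rw [BG.lintegral_nat μ (fun ω => gameDuration 3 n ω)
    (fun k => hT (MeasurableSet.of_discrete (s := {m : ℕ | k < m})))]
  rw [tsum_congr fun k => BG.measure_gt μ hn hindep hunif k]
  exact BG.sum_eval hn
end

section
/- For r balls placed independently uniformly at random into n cells, the probability that exactly t balls are sole occupants of their cells equals ∑_{j=t}^{min(n,r)} (−1)^{j−t} C(j,t) C(n,j) C(r,j) j! (n−j)^{r−j}/n^r. -/
open Finset


def dlSole {r n : ℕ} (f : Fin r → Fin n) : Finset (Fin r) :=
  Finset.univ.filter (fun b : Fin r => ∀ b' : Fin r, b' ≠ b → f b' ≠ f b)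

lemma dl_mem_sole {r n : ℕ} {f : Fin r → Fin n} {b : Fin r} :
    b ∈ dlSole f ↔ ∀ b' : Fin r, b' ≠ b → f b' ≠ f b := by
  simp [dlSole]

/-- Fiber count: functions with all of `J` sole and given restriction `g`. -/
lemma dl_fiber_card {r n : ℕ} (J : Finset (Fin r)) (g : ↥J → Fin n)
    (hg : Function.Injective g) :
    ((Finset.univ.filter (fun f : Fin r → Fin n => J ⊆ dlSole f)).filter
        (fun f => (fun b : ↥J => f b) = g)).card
      = (n - J.card) ^ (r - J.card) := by
  classical
  set C : Finset (Fin n) := Finset.univ.image g with hC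
  have hCcard : C.card = J.card := by
    rw [hC, Finset.card_image_of_injective _ hg, Finset.card_univ, Fintype.card_coe]
  have e : {f : Fin r → Fin n // (J ⊆ dlSole f) ∧ (fun b : ↥J => f b) = g}
      ≃ ({b : Fin r // b ∉ J} → {c : Fin n // c ∉ C}) := by
    refine ⟨fun f x => ⟨f.1 x.1, ?_⟩,
      fun h => ⟨fun b => if hb : b ∈ J then g ⟨b, hb⟩ else (h ⟨b, hb⟩).1, ?_, ?_⟩, ?_, ?_⟩
    · -- f.1 x.1 ∉ C
      intro hmem
      rw [hC, Finset.mem_image] at hmem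
      obtain ⟨b, -, hb⟩ := hmem
      have hgb : g b = f.1 b.1 := (congrFun f.2.2 b).symm
      have hne : (b.1 : Fin r) ≠ x.1 := by
        intro h; exact x.2 (h ▸ b.2)
      have := (dl_mem_sole.1 (f.2.1 b.2)) x.1 (fun h => hne h.symm)
      exact this (by rw [← hb, hgb])
    · -- J ⊆ dlSole
      intro b hb
      rw [dl_mem_sole]
      intro b' hb' hfeq
      by_cases hb'J : b' ∈ J
      · simp only [dif_pos hb, dif_pos hb'J] at hfeq
        exact hb' (congrArg Subtype.val (hg hfeq))
      · simp only [dif_pos hb, dif_neg hb'J] at hfeq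
        exact (h ⟨b', hb'J⟩).2 (hfeq ▸ (Finset.mem_image_of_mem g (Finset.mem_univ _)))
    · -- restriction = g
      funext b
      simp [b.2]
    · -- left inverse
      intro f
      apply Subtype.ext
      funext b
      by_cases hb : b ∈ J
      · simp only [dif_pos hb]
        exact (congrFun f.2.2 ⟨b, hb⟩).symm
      · simp only [dif_neg hb]
    · -- right inverse
      intro h
      funext x
      apply Subtype.ext
      simp [x.2]
  have h1 : ((Finset.univ.filter (fun f : Fin r → Fin n => J ⊆ dlSole f)).filter
        (fun f => (fun b : ↥J => f b) = g)).card
      = Fintype.card {f : Fin r → Fin n // (J ⊆ dlSole f) ∧ (fun b : ↥J => f b) = g} := by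
    rw [Fintype.card_subtype, Finset.filter_filter]
  rw [h1, Fintype.card_congr e, Fintype.card_fun]
  congr 1
  · -- card {c // c ∉ C} = n - J.card
    rw [Fintype.card_subtype]
    have : Finset.univ.filter (fun c : Fin n => c ∉ C) = Cᶜ := by
      ext c; simp
    rw [this, Finset.card_compl, hCcard, Fintype.card_fin]
  · rw [Fintype.card_subtype]
    have : Finset.univ.filter (fun b : Fin r => b ∉ J) = Jᶜ := by
      ext c; simp
    rw [this, Finset.card_compl, Fintype.card_fin]

lemma dl_countJ {r n : ℕ} (J : Finset (Fin r)) :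
    (Finset.univ.filter (fun f : Fin r → Fin n => J ⊆ dlSole f)).card
      = n.descFactorial J.card * (n - J.card) ^ (r - J.card) := by
  classical
  have hmap : ∀ f ∈ Finset.univ.filter (fun f : Fin r → Fin n => J ⊆ dlSole f),
      (fun b : ↥J => f b) ∈ Finset.univ.filter (fun g : ↥J → Fin n => Function.Injective g) := by
    intro f hf
    rw [Finset.mem_filter] at hf ⊢
    refine ⟨Finset.mem_univ _, ?_⟩
    intro b₁ b₂ heq
    by_contra hne
    have hne' : (b₁ : Fin r) ≠ (b₂ : Fin r) := fun h => hne (Subtype.ext h)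
    exact (dl_mem_sole.1 (hf.2 b₂.2)) b₁.1 hne' heq
  rw [Finset.card_eq_sum_card_fiberwise hmap]
  have hconst : ∀ g ∈ Finset.univ.filter (fun g : ↥J → Fin n => Function.Injective g),
      ((Finset.univ.filter (fun f : Fin r → Fin n => J ⊆ dlSole f)).filter
        (fun f => (fun b : ↥J => f b) = g)).card = (n - J.card) ^ (r - J.card) := by
    intro g hg
    exact dl_fiber_card J g (Finset.mem_filter.1 hg).2
  rw [Finset.sum_congr rfl hconst, Finset.sum_const, smul_eq_mul]
  congr 1
  have : (Finset.univ.filter (fun g : ↥J → Fin n => Function.Injective g)).card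
      = Fintype.card {g : ↥J → Fin n // Function.Injective g} := (Fintype.card_subtype _).symm
  rw [this, Fintype.card_congr (Equiv.subtypeInjectiveEquivEmbedding ↥J (Fin n)),
    Fintype.card_embedding_eq, Fintype.card_coe, Fintype.card_fin]

lemma dl_Aj {r n : ℕ} (j : ℕ) :
    ∑ f : Fin r → Fin n, ((dlSole f).card.choose j)
      = r.choose j * (n.descFactorial j * (n - j) ^ (r - j)) := by
  classical
  have key : ∀ f : Fin r → Fin n, (dlSole f).card.choose j
      = ∑ J ∈ Finset.powersetCard j (Finset.univ : Finset (Fin r)),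
          (if J ⊆ dlSole f then 1 else 0) := by
    intro f
    rw [← Finset.card_filter]
    have : (Finset.powersetCard j (Finset.univ : Finset (Fin r))).filter (· ⊆ dlSole f)
        = Finset.powersetCard j (dlSole f) := by
      ext J
      simp [Finset.mem_powersetCard, and_comm, and_assoc]
    rw [this, Finset.card_powersetCard]
  rw [Finset.sum_congr rfl (fun f _ => key f), Finset.sum_comm]
  have inner : ∀ J ∈ Finset.powersetCard j (Finset.univ : Finset (Fin r)),
      (∑ f : Fin r → Fin n, if J ⊆ dlSole f then 1 else 0)
        = n.descFactorial j * (n - j) ^ (r - j) := by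
    intro J hJ
    have hJc : J.card = j := (Finset.mem_powersetCard.1 hJ).2
    rw [← Finset.card_filter, dl_countJ J, hJc]
  rw [Finset.sum_congr rfl inner, Finset.sum_const, smul_eq_mul,
    Finset.card_powersetCard, Finset.card_univ, Fintype.card_fin]

lemma dl_alt_real (N : ℕ) :
    ∑ i ∈ Finset.range (N + 1), (-1 : ℝ) ^ i * (N.choose i : ℝ)
      = if N = 0 then 1 else 0 := by
  have h := Int.alternating_sum_range_choose (n := N)
  have : ((∑ i ∈ Finset.range (N + 1), (-1 : ℤ) ^ i * (N.choose i : ℤ) : ℤ) : ℝ)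
      = ∑ i ∈ Finset.range (N + 1), (-1 : ℝ) ^ i * (N.choose i : ℝ) := by
    push_cast
    rfl
  rw [← this, h]
  split <;> norm_num

lemma dl_alt (t m s : ℕ) (hsm : s ≤ m) :
    ∑ j ∈ Finset.Icc t m, (-1 : ℝ) ^ (j - t) * (j.choose t : ℝ) * (s.choose j : ℝ)
      = if s = t then 1 else 0 := by
  rcases lt_or_ge s t with hst | hts
  · rw [if_neg (by omega)]
    apply Finset.sum_eq_zero
    intro j hj
    have : s.choose j = 0 := Nat.choose_eq_zero_of_lt (lt_of_lt_of_le hst (Finset.mem_Icc.1 hj).1)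
    rw [this]; simp
  · have hsub : Finset.Icc t s ⊆ Finset.Icc t m := Finset.Icc_subset_Icc_right hsm
    rw [← Finset.sum_subset hsub (fun j hj hj' => by
      have hjs : s < j := by
        rw [Finset.mem_Icc] at hj hj'
        omega
      rw [Nat.choose_eq_zero_of_lt hjs]
      simp)]
    have hcong : ∀ j ∈ Finset.Icc t s,
        (-1 : ℝ) ^ (j - t) * (j.choose t : ℝ) * (s.choose j : ℝ)
          = (s.choose t : ℝ) * ((-1 : ℝ) ^ (j - t) * ((s - t).choose (j - t) : ℝ)) := by
      intro j hj
      rw [Finset.mem_Icc] at hj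
      have := Nat.choose_mul (n := s) hj.1
      have hc : (s.choose j : ℝ) * (j.choose t : ℝ) = (s.choose t : ℝ) * ((s - t).choose (j - t) : ℝ) := by
        exact_mod_cast congrArg (Nat.cast : ℕ → ℝ) this
      rw [mul_assoc, mul_comm (j.choose t : ℝ), hc]
      ring
    rw [Finset.sum_congr rfl hcong, ← Finset.mul_sum]
    have hre : ∑ j ∈ Finset.Icc t s, (-1 : ℝ) ^ (j - t) * ((s - t).choose (j - t) : ℝ)
        = ∑ i ∈ Finset.range (s - t + 1), (-1 : ℝ) ^ i * ((s - t).choose i : ℝ) := by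
      rw [← Finset.Ico_add_one_right_eq_Icc, Finset.sum_Ico_eq_sum_range]
      have : s + 1 - t = s - t + 1 := by omega
      rw [this]
      refine Finset.sum_congr rfl (fun i _ => ?_)
      rw [Nat.add_sub_cancel_left]
    rw [hre, dl_alt_real]
    by_cases hst : s = t
    · subst hst
      simp
    · rw [if_neg (by omega), if_neg hst, mul_zero]

lemma dl_sole_card_le {r n : ℕ} (f : Fin r → Fin n) : (dlSole f).card ≤ min n r := by
  refine le_min ?_ ?_
  · have hinj : Set.InjOn f (dlSole f : Set (Fin r)) := by
      intro a ha b hb heq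
      by_contra hne
      exact (dl_mem_sole.1 (by exact_mod_cast hb)) a hne heq
    have := Finset.card_le_card_of_injOn f (fun a _ => Finset.mem_univ (f a)) hinj
    simpa using this
  · simpa using Finset.card_le_univ (dlSole f)

lemma dl_numerator (r n t : ℕ) :
    ((Finset.univ.filter (fun f : Fin r → Fin n => (dlSole f).card = t)).card : ℝ)
      = ∑ j ∈ Finset.Icc t (min n r),
          (-1 : ℝ) ^ (j - t) * (j.choose t) * (n.choose j) * (r.choose j) *
            (Nat.factorial j) * ((n - j : ℕ) : ℝ) ^ (r - j) := by
  classical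
  have step1 : ∀ j ∈ Finset.Icc t (min n r),
      (-1 : ℝ) ^ (j - t) * (j.choose t) * (n.choose j) * (r.choose j) *
          (Nat.factorial j) * ((n - j : ℕ) : ℝ) ^ (r - j)
        = ∑ f : Fin r → Fin n,
            (-1 : ℝ) ^ (j - t) * (j.choose t : ℝ) * (((dlSole f).card.choose j : ℕ) : ℝ) := by
    intro j _
    rw [← Finset.mul_sum]
    have h := dl_Aj (r := r) (n := n) j
    have hcast : (∑ f : Fin r → Fin n, (((dlSole f).card.choose j : ℕ) : ℝ))
        = ((r.choose j * (n.descFactorial j * (n - j) ^ (r - j)) : ℕ) : ℝ) := by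
      rw [← h]
      push_cast
      rfl
    rw [hcast, Nat.descFactorial_eq_factorial_mul_choose]
    push_cast
    ring
  rw [Finset.sum_congr rfl step1, Finset.sum_comm]
  have step2 : ∀ f : Fin r → Fin n,
      (∑ j ∈ Finset.Icc t (min n r),
          (-1 : ℝ) ^ (j - t) * (j.choose t : ℝ) * (((dlSole f).card.choose j : ℕ) : ℝ))
        = if (dlSole f).card = t then 1 else 0 := by
    intro f
    exact dl_alt t (min n r) (dlSole f).card (dl_sole_card_le f)
  rw [Finset.sum_congr rfl (fun f _ => step2 f), Finset.sum_boole]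

/-- For `r` balls placed independently uniformly at random into `n` cells
(a uniformly random function `f : Fin r → Fin n`), the probability that exactly `t` balls
are sole occupants of their cells equals
`∑_{j=t}^{min(n,r)} (−1)^{j−t} C(j,t) C(n,j) C(r,j) j! (n−j)^{r−j}/n^r`
(the Dym–Luks inclusion-exclusion formula). -/
theorem dym_luks_prob_exactly_t_captured (r n t : ℕ) (hr : 1 ≤ r) (hn : 1 ≤ n) :
    ((Finset.univ.filter
        (fun f : Fin r → Fin n =>
          (Finset.univ.filter (fun b : Fin r => ∀ b' : Fin r, b' ≠ b → f b' ≠ f b)).card = t)).card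
        : ℝ) / (n : ℝ) ^ r =
      ∑ j ∈ Finset.Icc t (min n r),
        (-1 : ℝ) ^ (j - t) * (j.choose t) * (n.choose j) * (r.choose j) *
          (Nat.factorial j) * ((n - j : ℕ) : ℝ) ^ (r - j) / (n : ℝ) ^ r := by
  classical
  rw [← Finset.sum_div]
  congr 1
  exact dl_numerator r n t
end

section
/- The sums over t of the Dym–Luks probabilities equal one: for all positive integers r and n, ∑_{t=0}^{r} ∑_{j=t}^{n} (−1)^{j−t} C(j,t) C(n,j) C(r,j) j! (n−j)^{r−j}/n^r = 1. -/
open Finset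

/-- The Dym–Luks transition probabilities
`P_{r,r−t}(n) = ∑_{j=t}^{n} (−1)^{j−t} C(j,t) C(n,j) C(r,j) j! (n−j)^{r−j}/n^r`
form a probability distribution over `t ∈ {0,…,r}`: their sum equals one, for all
positive integers `r` and `n`. -/
theorem dym_luks_probabilities_sum_to_one (r n : ℕ) (hr : 1 ≤ r) (hn : 1 ≤ n) :
    ∑ t ∈ Finset.range (r + 1), ∑ j ∈ Finset.Icc t n,
        (-1 : ℝ) ^ (j - t) * (j.choose t) * (n.choose j) * (r.choose j) *
          (Nat.factorial j) * ((n - j : ℕ) : ℝ) ^ (r - j) / (n : ℝ) ^ r = 1 := by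
  have hswap : ∀ (t j : ℕ), t ∈ Finset.range (r + 1) ∧ j ∈ Finset.Icc t n ↔
      t ∈ Finset.range (min r j + 1) ∧ j ∈ Finset.range (n + 1) := by
    intro t j
    simp only [Finset.mem_range, Finset.mem_Icc, Nat.lt_succ_iff, le_min_iff]
    omega
  rw [Finset.sum_comm' hswap]
  have key : ∀ j ∈ Finset.range (n + 1),
      (∑ t ∈ Finset.range (min r j + 1),
        (-1 : ℝ) ^ (j - t) * (j.choose t) * (n.choose j) * (r.choose j) *
          (Nat.factorial j) * ((n - j : ℕ) : ℝ) ^ (r - j) / (n : ℝ) ^ r)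
      = if j = 0 then 1 else 0 := by
    intro j hj
    rcases Nat.eq_zero_or_pos j with rfl | hjpos
    · have hne : (n : ℝ) ≠ 0 := Nat.cast_ne_zero.mpr (by omega)
      simp [div_self (pow_ne_zero r hne)]
    · have hjne : j ≠ 0 := Nat.pos_iff_ne_zero.mp hjpos
      rw [if_neg hjne]
      by_cases hjr : j ≤ r
      · rw [min_eq_right hjr]
        have hfac : ∀ t ∈ Finset.range (j + 1),
            (-1 : ℝ) ^ (j - t) * (j.choose t) * (n.choose j) * (r.choose j) *
              (Nat.factorial j) * ((n - j : ℕ) : ℝ) ^ (r - j) / (n : ℝ) ^ r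
            = ((-1 : ℝ) ^ t * (j.choose t)) *
              ((-1 : ℝ) ^ j * (n.choose j) * (r.choose j) *
                (Nat.factorial j) * ((n - j : ℕ) : ℝ) ^ (r - j) / (n : ℝ) ^ r) := by
          intro t ht
          have ht' : t ≤ j := Nat.lt_succ_iff.mp (Finset.mem_range.mp ht)
          have h1 : (-1 : ℝ) ^ j = (-1) ^ (j - t) * (-1) ^ t := by
            rw [← pow_add, Nat.sub_add_cancel ht']
          have h2 : ((-1 : ℝ)) ^ t * (-1) ^ t = 1 := by
            rw [← pow_add]; exact Even.neg_one_pow ⟨t, rfl⟩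
          have hsign : (-1 : ℝ) ^ (j - t) = (-1) ^ j * (-1) ^ t := by
            rw [h1, mul_assoc, h2, mul_one]
          rw [hsign]; ring
        rw [Finset.sum_congr rfl hfac, ← Finset.sum_mul]
        have h0 : ∑ t ∈ Finset.range (j + 1), (-1 : ℝ) ^ t * (j.choose t) = 0 := by
          have hz := Int.alternating_sum_range_choose (n := j)
          rw [if_neg hjne] at hz
          have := congrArg (Int.cast : ℤ → ℝ) hz
          push_cast at this
          exact this
        rw [h0, zero_mul]
      · apply Finset.sum_eq_zero
        intro t _
        rw [Nat.choose_eq_zero_of_lt (lt_of_not_ge hjr)]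
        simp
  rw [Finset.sum_congr rfl key, Finset.sum_ite_eq' (Finset.range (n + 1)) 0 (fun _ => (1:ℝ))]
  simp
end

section
/- In the ball-and-cell game, the probability generating functions satisfy the recurrence F_{r,n}(x) = (x/(1 − P_{r,r}(n)·x)) · ∑_{t=1}^{r} P_{r,r−t}(n) · F_{r−t,n}(x), with F_{0,n}(x) = 1, valid for |x| < 1, provided P_{r,r}(n) < 1. -/
open MeasureTheory ProbabilityTheory Finset
open Function

/-- The probability `P_{r,r-t}(n)` that exactly `t` of the `r` balls are captured (are sole
occupants of their cells) when `r` balls are placed uniformly at random into `n` cells. -/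
noncomputable def captureProb (r n t : ℕ) : ℝ :=
  ((Finset.univ.filter
      (fun f : Fin r → Fin n =>
        (Finset.univ.filter (fun b : Fin r => ∀ b' : Fin r, b' ≠ b → f b' ≠ f b)).card = t)).card
    : ℝ) / (n : ℝ) ^ r

lemma remainingBalls_subset (r n : ℕ) (S : Finset (Fin r)) (f : Fin r → Fin n) :
    remainingBalls r n S f ⊆ S := Finset.filter_subset _ _

lemma remainingBalls_empty (r n : ℕ) (f : Fin r → Fin n) :
    remainingBalls r n ∅ f = ∅ := by simp [remainingBalls]

def finState (r n : ℕ) : (S : Finset (Fin r)) → (k : ℕ) → (Fin k → (Fin r → Fin n)) → Finset (Fin r)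
  | S, 0, _ => S
  | S, k+1, y => finState r n (remainingBalls r n S (y 0)) k (fun i => y i.succ)

lemma finState_empty (r n : ℕ) (k : ℕ) (y : Fin k → (Fin r → Fin n)) :
    finState r n ∅ k y = ∅ := by
  induction k with
  | zero => rfl
  | succ k ih => rw [finState, remainingBalls_empty]; exact ih _

lemma finState_last (r n : ℕ) (S : Finset (Fin r)) (k : ℕ) (y : Fin (k+1) → (Fin r → Fin n)) :
    finState r n S (k+1) y
      = remainingBalls r n (finState r n S k (fun i => y i.castSucc)) (y (Fin.last k)) := by
  induction k generalizing S with
  | zero => rfl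
  | succ k ih =>
      rw [finState, ih]
      rfl

lemma gameState_eq_finState (r n : ℕ) (ω : ℕ → Fin r → Fin n) (k : ℕ) :
    gameState r n ω k = finState r n Finset.univ k (fun i => ω i) := by
  induction k with
  | zero => rfl
  | succ k ih =>
      rw [gameState, ih, finState_last]
      congr 1

lemma remainingBalls_map (r s n : ℕ) (j : Fin s ↪ Fin r) (T : Finset (Fin s)) (g : Fin r → Fin n) :
    remainingBalls r n (T.map j) g = (remainingBalls s n T (g ∘ j)).map j := by
  ext b
  simp only [remainingBalls, Finset.mem_map, Finset.mem_filter, comp_apply]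
  constructor
  · rintro ⟨⟨c, hc, rfl⟩, b', ⟨⟨c', hc', rfl⟩, hne, heq⟩⟩
    exact ⟨c, ⟨hc, c', hc', fun h => hne (by rw [h]), heq⟩, rfl⟩
  · rintro ⟨c, ⟨hc, c', hc', hne, heq⟩, rfl⟩
    exact ⟨⟨c, hc, rfl⟩, j c', ⟨⟨c', hc', rfl⟩, fun h => hne (j.injective h), heq⟩⟩

lemma finState_map (r s n : ℕ) (j : Fin s ↪ Fin r) (k : ℕ) (T : Finset (Fin s))
    (y : Fin k → (Fin r → Fin n)) :
    finState r n (T.map j) k y = (finState s n T k (fun i => y i ∘ j)).map j := by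
  induction k generalizing T with
  | zero => rfl
  | succ k ih =>
      show finState r n (remainingBalls r n (T.map j) (y 0)) k (fun i => y i.succ) = _
      rw [remainingBalls_map, ih]
      rfl

lemma finState_empty' (r n : ℕ) (k : ℕ) (y : Fin k → (Fin r → Fin n)) :
    finState r n ∅ k y = ∅ := by
  induction k with
  | zero => rfl
  | succ k ih =>
      show finState r n (remainingBalls r n ∅ (y 0)) k _ = ∅
      rw [show remainingBalls r n ∅ (y 0) = ∅ by simp [remainingBalls]]
      exact ih _

lemma finState_succ (r n : ℕ) (S : Finset (Fin r)) (k : ℕ) (y : Fin (k+1) → Fin r → Fin n) :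
    finState r n S (k+1) y = finState r n (remainingBalls r n S (y 0)) k (fun i => y i.succ) := rfl

noncomputable def emptyCount (r n : ℕ) (S : Finset (Fin r)) (k : ℕ) : ℕ :=
  (Finset.univ.filter fun y : Fin k → (Fin r → Fin n) => finState r n S k y = ∅).card

lemma emptyCount_zero (r n : ℕ) (S : Finset (Fin r)) :
    emptyCount r n S 0 = if S = ∅ then 1 else 0 := by
  classical
  by_cases h : S = ∅ <;>
    simp [emptyCount, finState, h, Finset.filter_true_of_mem, Finset.card_univ]

lemma emptyCount_empty (r n : ℕ) (k : ℕ) : emptyCount r n (∅ : Finset (Fin r)) k = (n^r)^k := by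
  classical
  simp [emptyCount, finState_empty', Finset.card_univ, Fintype.card_fun]

lemma emptyCount_le (r n : ℕ) (S : Finset (Fin r)) (k : ℕ) : emptyCount r n S k ≤ (n^r)^k := by
  classical
  calc emptyCount r n S k ≤ (Finset.univ : Finset (Fin k → Fin r → Fin n)).card :=
        Finset.card_le_card (Finset.filter_subset _ _)
    _ = (n^r)^k := by simp [Finset.card_univ, Fintype.card_fun]

lemma emptyCount_succ (r n : ℕ) (S : Finset (Fin r)) (k : ℕ) :
    emptyCount r n S (k+1) = ∑ g : Fin r → Fin n, emptyCount r n (remainingBalls r n S g) k := by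
  classical
  rw [emptyCount,
    Finset.card_eq_sum_card_fiberwise (f := fun y : Fin (k+1) → Fin r → Fin n => y 0)
      (t := Finset.univ) (fun x _ => Finset.mem_univ _)]
  refine Finset.sum_congr rfl fun g _ => ?_
  rw [Finset.filter_filter, emptyCount]
  refine Finset.card_bij' (fun y _ => fun i => y i.succ) (fun z _ => Fin.cons g z) ?_ ?_ ?_ ?_
  · intro y hy
    simp only [Finset.mem_filter, Finset.mem_univ, true_and] at hy ⊢
    obtain ⟨h1, h2⟩ := hy
    rw [← h2]
    exact h1
  · intro z hz
    simp only [Finset.mem_filter, Finset.mem_univ, true_and] at hz ⊢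
    refine ⟨?_, Fin.cons_zero _ _⟩
    rw [finState_succ]
    have h0 : (Fin.cons g z : Fin (k+1) → Fin r → Fin n) 0 = g := Fin.cons_zero _ _
    have hz' : (fun i : Fin k => (Fin.cons g z : Fin (k+1) → Fin r → Fin n) i.succ) = z :=
      funext fun i => @Fin.cons_succ k (fun _ => Fin r → Fin n) g z i
    rw [h0, hz']
    exact hz
  · intro y hy
    simp only [Finset.mem_filter, Finset.mem_univ, true_and] at hy
    obtain ⟨h1, h2⟩ := hy
    subst h2
    exact Fin.cons_self_tail y
  · intro z hz
    funext i
    simp [Fin.cons_succ]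
open scoped Classical in
lemma card_comp_fiber (r s n : ℕ) (j : Fin s ↪ Fin r) (v : Fin s → Fin n) :
    Fintype.card {w : Fin r → Fin n // w ∘ j = v} = n ^ (r - s) := by
  have e : {w : Fin r → Fin n // w ∘ j = v} ≃ ({b : Fin r // b ∉ Set.range j} → Fin n) := by
    refine
      { toFun := fun w b => w.1 b.1
        invFun := fun u =>
          ⟨fun b => if h : ∃ i, j i = b then v h.choose else u ⟨b, by
              simpa [Set.mem_range] using h⟩, ?_⟩
        left_inv := ?_
        right_inv := ?_ }
    · funext i
      have h : ∃ i', j i' = j i := ⟨i, rfl⟩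
      have hc : h.choose = i := j.injective h.choose_spec
      simp only [comp_apply, dif_pos h, hc]
    · rintro ⟨w, hw⟩
      apply Subtype.ext
      funext b
      dsimp only
      by_cases h : ∃ i, j i = b
      · rw [dif_pos h]
        have := congrFun hw h.choose
        simp only [comp_apply] at this
        rw [← this, h.choose_spec]
      · rw [dif_neg h]
    · intro u
      funext b
      dsimp only
      have h : ¬ ∃ i, j i = b.1 := by simpa [Set.mem_range] using b.2
      rw [dif_neg h]
  have h1 : Fintype.card {b : Fin r // b ∈ Set.range j} = s :=
    ((Fintype.card_congr (Equiv.ofInjective j j.injective)).symm).trans (Fintype.card_fin s)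
  rw [Fintype.card_congr e, Fintype.card_fun, Fintype.card_fin]
  congr 1
  rw [Fintype.card_subtype_compl (fun b : Fin r => b ∈ Set.range j), h1, Fintype.card_fin]

open scoped Classical in
lemma card_comp_fiber' (r s n k : ℕ) (j : Fin s ↪ Fin r) (z : Fin k → Fin s → Fin n) :
    (Finset.univ.filter fun y : Fin k → Fin r → Fin n => (fun i => y i ∘ j) = z).card
      = (n ^ (r - s)) ^ k := by
  rw [← Fintype.card_subtype]
  have e1 : {y : Fin k → Fin r → Fin n // (fun i => y i ∘ j) = z}
      ≃ ∀ i : Fin k, {w : Fin r → Fin n // w ∘ j = z i} := by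
    refine (Equiv.subtypeEquivRight ?_).trans (Equiv.subtypePiEquivPi)
    intro y
    rw [funext_iff]
  rw [Fintype.card_congr e1, Fintype.card_pi]
  simp [card_comp_fiber]

open scoped Classical in
lemma emptyCount_eq (r n : ℕ) (S : Finset (Fin r)) (k : ℕ) :
    emptyCount r n S k = emptyCount S.card n Finset.univ k * (n ^ (r - S.card)) ^ k := by
  set s := S.card with hs
  set j : Fin s ↪ Fin r := (S.orderEmbOfFin rfl).toEmbedding with hj
  have hmap : Finset.univ.map j = S := by
    ext b
    simp only [Finset.mem_map, Finset.mem_univ, true_and]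
    constructor
    · rintro ⟨i, rfl⟩; exact S.orderEmbOfFin_mem rfl i
    · intro hb
      have : b ∈ Set.range (S.orderEmbOfFin rfl) := by
        rw [Finset.range_orderEmbOfFin]; exact hb
      obtain ⟨i, hi⟩ := this
      exact ⟨i, hi⟩
  have hcond : ∀ y : Fin k → Fin r → Fin n,
      (finState r n S k y = ∅) ↔ (finState s n Finset.univ k (fun i => y i ∘ j) = ∅) := by
    intro y
    rw [← hmap, finState_map, Finset.map_eq_empty]
  rw [emptyCount]
  rw [Finset.card_eq_sum_card_fiberwise (f := fun y : Fin k → Fin r → Fin n => fun i => y i ∘ j)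
      (t := Finset.univ.filter fun z : Fin k → Fin s → Fin n => finState s n Finset.univ k z = ∅)
      (fun y hy => by
        simp only [Finset.coe_filter, Set.mem_setOf_eq, Finset.mem_filter, Finset.mem_univ, true_and] at hy ⊢
        exact (hcond y).1 hy)]
  have hterm : ∀ z ∈ (Finset.univ.filter fun z : Fin k → Fin s → Fin n =>
      finState s n Finset.univ k z = ∅),
      ((Finset.univ.filter fun y : Fin k → Fin r → Fin n => finState r n S k y = ∅).filter
        (fun y => (fun i => y i ∘ j) = z)).card = (n ^ (r - s)) ^ k := by
    intro z hz
    simp only [Finset.mem_filter, Finset.mem_univ, true_and] at hz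
    rw [Finset.filter_filter]
    have heq : Finset.filter
          (fun y : Fin k → Fin r → Fin n => finState r n S k y = ∅ ∧ (fun i => y i ∘ j) = z)
          Finset.univ
        = Finset.filter (fun y : Fin k → Fin r → Fin n => (fun i => y i ∘ j) = z) Finset.univ := by
      apply Finset.filter_congr
      intro y _
      constructor
      · exact fun h => h.2
      · intro h
        exact ⟨(hcond y).2 (by rw [h]; exact hz), h⟩
    rw [heq]
    exact card_comp_fiber' r s n k j z
  rw [Finset.sum_congr rfl hterm, Finset.sum_const, smul_eq_mul, emptyCount]

section
variable {r n : ℕ} {μ : Measure (ℕ → Fin r → Fin n)}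

lemma measSet_coord (i : ℕ) (c : Fin r → Fin n) :
    MeasurableSet {ω : ℕ → Fin r → Fin n | ω i = c} := by
  have : MeasurableSet ((fun ω : ℕ → Fin r → Fin n => ω i) ⁻¹' {c}) :=
    measurable_pi_apply i (measurableSet_singleton c)
  simpa [Set.preimage, Set.mem_singleton_iff] using this

lemma window_eq_biUnion (k : ℕ) (Q : (Fin k → Fin r → Fin n) → Prop) [DecidablePred Q] :
    {ω : ℕ → Fin r → Fin n | Q (fun i => ω i)}
      = ⋃ y ∈ Finset.univ.filter Q, {ω : ℕ → Fin r → Fin n | (fun i : Fin k => ω i) = y} := by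
  ext ω
  simp only [Set.mem_setOf_eq, Set.mem_iUnion, Finset.mem_filter, Finset.mem_univ, true_and]
  constructor
  · intro h; exact ⟨_, h, rfl⟩
  · rintro ⟨y, hy, h⟩; rw [h]; exact hy

lemma measSet_point (k : ℕ) (y : Fin k → Fin r → Fin n) :
    MeasurableSet {ω : ℕ → Fin r → Fin n | (fun i : Fin k => ω i) = y} := by
  have : {ω : ℕ → Fin r → Fin n | (fun i : Fin k => ω i) = y}
      = ⋂ i : Fin k, {ω : ℕ → Fin r → Fin n | ω i = y i} := by
    ext ω
    simp only [Set.mem_setOf_eq, Set.mem_iInter, funext_iff]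
  rw [this]
  exact MeasurableSet.iInter fun i => measSet_coord i (y i)

lemma measSet_window (k : ℕ) (Q : (Fin k → Fin r → Fin n) → Prop) [DecidablePred Q] :
    MeasurableSet {ω : ℕ → Fin r → Fin n | Q (fun i => ω i)} := by
  rw [window_eq_biUnion]
  exact (Finset.univ.filter Q).measurableSet_biUnion fun y _ => measSet_point k y

lemma meas_point (hn : 1 ≤ n)
    (hindep : iIndepFun (fun k (ω : ℕ → Fin r → Fin n) => ω k) μ)
    (hunif : ∀ (k : ℕ) (g : Fin r → Fin n), μ {ω | ω k = g} = ((n : ENNReal) ^ r)⁻¹)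
    (k : ℕ) (y : Fin k → Fin r → Fin n) :
    μ {ω : ℕ → Fin r → Fin n | (fun i : Fin k => ω i) = y} = (((n : ENNReal)^r)⁻¹) ^ k := by
  set c : ℕ → Fin r → Fin n := fun i => if h : i < k then y ⟨i, h⟩ else fun _ => ⟨0, hn⟩ with hc
  have hset : {ω : ℕ → Fin r → Fin n | (fun i : Fin k => ω i) = y}
      = ⋂ i ∈ Finset.range k, (fun ω : ℕ → Fin r → Fin n => ω i) ⁻¹' {c i} := by
    ext ω
    simp only [Set.mem_setOf_eq, Set.mem_iInter, funext_iff, Finset.mem_range,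
      Set.mem_preimage, Set.mem_singleton_iff]
    constructor
    · intro h i hi
      rw [hc]; simp only [dif_pos hi]; exact h ⟨i, hi⟩
    · intro h i
      have := h i.1 i.2
      rw [hc] at this; simp only [dif_pos i.2] at this
      simpa using this
  rw [hset, hindep.meas_biInter (fun i _ => ⟨{c i}, measurableSet_singleton _, rfl⟩)]
  have : ∀ i ∈ Finset.range k, μ ((fun ω : ℕ → Fin r → Fin n => ω i) ⁻¹' {c i})
      = ((n : ENNReal) ^ r)⁻¹ := by
    intro i _
    have := hunif i (c i)
    simpa [Set.preimage, Set.mem_singleton_iff] using this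
  rw [Finset.prod_congr rfl this, Finset.prod_const, Finset.card_range]

lemma meas_window (hn : 1 ≤ n)
    (hindep : iIndepFun (fun k (ω : ℕ → Fin r → Fin n) => ω k) μ)
    (hunif : ∀ (k : ℕ) (g : Fin r → Fin n), μ {ω | ω k = g} = ((n : ENNReal) ^ r)⁻¹)
    (k : ℕ) (Q : (Fin k → Fin r → Fin n) → Prop) [DecidablePred Q] :
    μ {ω : ℕ → Fin r → Fin n | Q (fun i => ω i)}
      = (Finset.univ.filter Q).card * (((n : ENNReal)^r)⁻¹) ^ k := by
  rw [window_eq_biUnion]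
  rw [measure_biUnion_finset ?hd (fun y _ => measSet_point k y)]
  · rw [Finset.sum_congr rfl (fun y _ => meas_point hn hindep hunif k y),
      Finset.sum_const, nsmul_eq_mul]
  case hd =>
    intro y1 h1 y2 h2 hne
    simp only [Function.onFun]
    apply Set.disjoint_left.2
    intro ω hω1 hω2
    simp only [Set.mem_setOf_eq] at hω1 hω2
    exact hne (hω1 ▸ hω2 ▸ rfl)
end


section
variable {r n : ℕ} {μ : Measure (ℕ → Fin r → Fin n)}

lemma gameState_empty_mono (ω : ℕ → Fin r → Fin n) {k m : ℕ} (hkm : k ≤ m)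
    (h : gameState r n ω k = ∅) : gameState r n ω m = ∅ := by
  induction m with
  | zero => exact (Nat.le_zero.mp hkm) ▸ h
  | succ m ih =>
      rcases Nat.lt_or_ge k (m+1) with h' | h'
      · have := ih (Nat.lt_succ_iff.mp h')
        rw [gameState, this, remainingBalls_empty]
      · exact (Nat.le_antisymm hkm h') ▸ h

lemma gameState_zero_ne (hr : 1 ≤ r) (ω : ℕ → Fin r → Fin n) :
    gameState r n ω 0 ≠ ∅ := by
  have : Nonempty (Fin r) := ⟨⟨0, hr⟩⟩
  simp [gameState, Finset.univ_nonempty.ne_empty]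

lemma duration_zero_iff (hr : 1 ≤ r) (ω : ℕ → Fin r → Fin n) :
    gameDuration r n ω = 0 ↔ ∀ k, gameState r n ω k ≠ ∅ := by
  constructor
  · intro h k hk
    have hne : {k | gameState r n ω k = ∅}.Nonempty := ⟨k, hk⟩
    have := Nat.sInf_mem hne
    rw [show sInf {k | gameState r n ω k = ∅} = gameDuration r n ω from rfl, h] at this
    exact gameState_zero_ne hr ω this
  · intro h
    have : {k | gameState r n ω k = ∅} = ∅ := by
      ext k; simp only [Set.mem_setOf_eq, Set.mem_empty_iff_false, iff_false]; exact h k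
    rw [gameDuration, this, Nat.sInf_empty]

lemma duration_succ_iff (ω : ℕ → Fin r → Fin n) (m : ℕ) :
    gameDuration r n ω = m + 1
      ↔ gameState r n ω (m+1) = ∅ ∧ gameState r n ω m ≠ ∅ := by
  constructor
  · intro h
    have hne : {k | gameState r n ω k = ∅}.Nonempty := by
      by_contra hc
      rw [Set.not_nonempty_iff_eq_empty] at hc
      rw [gameDuration, hc, Nat.sInf_empty] at h
      exact Nat.succ_ne_zero m h.symm
    have h1 := Nat.sInf_mem hne
    rw [show sInf {k | gameState r n ω k = ∅} = gameDuration r n ω from rfl, h] at h1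
    refine ⟨h1, fun hm => ?_⟩
    have : gameDuration r n ω ≤ m := Nat.sInf_le hm
    omega
  · rintro ⟨h1, h2⟩
    have hle : gameDuration r n ω ≤ m + 1 := Nat.sInf_le h1
    have hgt : ¬ gameDuration r n ω ≤ m := by
      intro hc
      have hne : {k | gameState r n ω k = ∅}.Nonempty := ⟨m+1, h1⟩
      have := Nat.sInf_mem hne
      exact h2 (gameState_empty_mono ω hc this)
    omega

lemma measSet_state (k : ℕ) :
    MeasurableSet {ω : ℕ → Fin r → Fin n | gameState r n ω k = ∅} := by
  classical
  have : {ω : ℕ → Fin r → Fin n | gameState r n ω k = ∅}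
      = {ω : ℕ → Fin r → Fin n |
          (fun y : Fin k → Fin r → Fin n => finState r n Finset.univ k y = ∅) (fun i => ω i)} := by
    ext ω; simp [gameState_eq_finState]
  rw [this]
  exact measSet_window k (fun y => finState r n Finset.univ k y = ∅)

lemma measSet_dur (hr : 1 ≤ r) (m : ℕ) :
    MeasurableSet {ω : ℕ → Fin r → Fin n | gameDuration r n ω = m} := by
  classical
  cases m with
  | zero =>
      have : {ω : ℕ → Fin r → Fin n | gameDuration r n ω = 0}
          = (⋃ k, {ω : ℕ → Fin r → Fin n | gameState r n ω k = ∅})ᶜ := by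
        ext ω
        simp only [Set.mem_setOf_eq, Set.mem_compl_iff, Set.mem_iUnion, duration_zero_iff hr]
        push_neg
        rfl
      rw [this]
      exact (MeasurableSet.iUnion fun k => measSet_state k).compl
  | succ m =>
      have : {ω : ℕ → Fin r → Fin n | gameDuration r n ω = m + 1}
          = {ω : ℕ → Fin r → Fin n | gameState r n ω (m+1) = ∅}
            \ {ω : ℕ → Fin r → Fin n | gameState r n ω m = ∅} := by
        ext ω
        simp only [Set.mem_setOf_eq, Set.mem_diff, duration_succ_iff]
      rw [this]
      exact (measSet_state (m+1)).diff (measSet_state m)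

lemma measurable_duration (hr : 1 ≤ r) :
    Measurable (fun ω : ℕ → Fin r → Fin n => gameDuration r n ω) := by
  exact measurable_to_countable' fun m => measSet_dur hr m
end

section
variable {r n : ℕ} {μ : Measure (ℕ → Fin r → Fin n)}

lemma meas_dur_succ [IsProbabilityMeasure μ] (m : ℕ) :
    μ {ω : ℕ → Fin r → Fin n | gameDuration r n ω = m + 1}
      = μ {ω : ℕ → Fin r → Fin n | gameState r n ω (m+1) = ∅}
        - μ {ω : ℕ → Fin r → Fin n | gameState r n ω m = ∅} := by
  have hsub : {ω : ℕ → Fin r → Fin n | gameState r n ω m = ∅}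
      ⊆ {ω : ℕ → Fin r → Fin n | gameState r n ω (m+1) = ∅} :=
    fun ω h => gameState_empty_mono ω (Nat.le_succ m) h
  have hset : {ω : ℕ → Fin r → Fin n | gameDuration r n ω = m + 1}
      = {ω : ℕ → Fin r → Fin n | gameState r n ω (m+1) = ∅}
        \ {ω : ℕ → Fin r → Fin n | gameState r n ω m = ∅} := by
    ext ω
    simp only [Set.mem_setOf_eq, Set.mem_diff, duration_succ_iff]
  rw [hset, measure_diff hsub (measSet_state m).nullMeasurableSet (measure_ne_top μ _)]

lemma meas_dur_zero [IsProbabilityMeasure μ] (hr : 1 ≤ r) :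
    μ {ω : ℕ → Fin r → Fin n | gameDuration r n ω = 0}
      = 1 - ⨆ k, μ {ω : ℕ → Fin r → Fin n | gameState r n ω k = ∅} := by
  have hset : {ω : ℕ → Fin r → Fin n | gameDuration r n ω = 0}
      = (⋃ k, {ω : ℕ → Fin r → Fin n | gameState r n ω k = ∅})ᶜ := by
    ext ω
    simp only [Set.mem_setOf_eq, Set.mem_compl_iff, Set.mem_iUnion, duration_zero_iff hr]
    push_neg
    rfl
  have hmono : Monotone (fun k => {ω : ℕ → Fin r → Fin n | gameState r n ω k = ∅}) := by
    intro a b hab ω h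
    exact gameState_empty_mono ω hab h
  rw [hset, measure_compl (MeasurableSet.iUnion fun k => measSet_state k) (measure_ne_top μ _),
    hmono.directed_le.measure_iUnion, measure_univ]

lemma integral_pow_dur [IsProbabilityMeasure μ] (hr : 1 ≤ r) {x : ℝ} (hx : |x| < 1) :
    ∫ ω, x ^ gameDuration r n ω ∂μ
      = ∑' m : ℕ, (μ {ω : ℕ → Fin r → Fin n | gameDuration r n ω = m}).toReal * x ^ m := by
  have hT : Measurable (fun ω : ℕ → Fin r → Fin n => gameDuration r n ω) :=
    measurable_duration hr
  have hfm : Measurable (fun m : ℕ => x ^ m) := measurable_from_top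
  have hmap : IsProbabilityMeasure (μ.map (fun ω : ℕ → Fin r → Fin n => gameDuration r n ω)) :=
    Measure.isProbabilityMeasure_map hT.aemeasurable
  have hint : Integrable (fun m : ℕ => x ^ m)
      (μ.map (fun ω : ℕ → Fin r → Fin n => gameDuration r n ω)) := by
    refine Integrable.mono' (integrable_const 1) hfm.aestronglyMeasurable
      (Filter.Eventually.of_forall fun m => ?_)
    calc ‖x ^ m‖ = ‖x‖ ^ m := norm_pow x m
      _ ≤ 1 := pow_le_one₀ (norm_nonneg x) (le_of_lt hx)
  have h1 : ∫ ω, x ^ gameDuration r n ω ∂μ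
      = ∫ m, x ^ m ∂(μ.map (fun ω : ℕ → Fin r → Fin n => gameDuration r n ω)) :=
    (integral_map hT.aemeasurable hfm.aestronglyMeasurable).symm
  rw [h1, integral_countable' hint]
  refine tsum_congr fun m => ?_
  rw [measureReal_def, Measure.map_apply hT (measurableSet_singleton m), smul_eq_mul]
  rfl
end

noncomputable def Af (r n : ℕ) (k : ℕ) : ℝ := (emptyCount r n Finset.univ k : ℝ) / ((n:ℝ)^r)^k

section
variable {n : ℕ}

lemma Af_nonneg (r k : ℕ) : 0 ≤ Af r n k := by
  rw [Af]
  positivity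

lemma Af_le_one (hn : 1 ≤ n) (r k : ℕ) : Af r n k ≤ 1 := by
  have hn0 : (0:ℝ) < (n:ℝ) := by exact_mod_cast hn
  rw [Af, div_le_one (by positivity)]
  have := emptyCount_le r n (Finset.univ : Finset (Fin r)) k
  calc (emptyCount r n Finset.univ k : ℝ) ≤ ((n^r)^k : ℕ) := by exact_mod_cast this
    _ = ((n:ℝ)^r)^k := by push_cast; ring

lemma Af_r_zero {r : ℕ} (hr : 1 ≤ r) : Af r n 0 = 0 := by
  have : Nonempty (Fin r) := ⟨⟨0, hr⟩⟩
  rw [Af, emptyCount_zero]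
  rw [if_neg Finset.univ_nonempty.ne_empty]
  simp

lemma Af_zero (k : ℕ) : Af 0 n k = 1 := by
  rw [Af, show (Finset.univ : Finset (Fin 0)) = ∅ from rfl, emptyCount_empty]
  norm_num

lemma meas_state_ofReal {r : ℕ} {μ : Measure (ℕ → Fin r → Fin n)} [IsProbabilityMeasure μ]
    (hn : 1 ≤ n)
    (hindep : iIndepFun (fun k (ω : ℕ → Fin r → Fin n) => ω k) μ)
    (hunif : ∀ (k : ℕ) (g : Fin r → Fin n), μ {ω | ω k = g} = ((n : ENNReal) ^ r)⁻¹)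
    (k : ℕ) :
    μ {ω : ℕ → Fin r → Fin n | gameState r n ω k = ∅} = ENNReal.ofReal (Af r n k) := by
  classical
  have h0 : {ω : ℕ → Fin r → Fin n | gameState r n ω k = ∅}
      = {ω : ℕ → Fin r → Fin n |
          (fun y : Fin k → Fin r → Fin n => finState r n Finset.univ k y = ∅) (fun i => ω i)} := by
    ext ω; simp [gameState_eq_finState]
  rw [h0, meas_window hn hindep hunif k
    (fun y : Fin k → Fin r → Fin n => finState r n Finset.univ k y = ∅)]
  have hcard : (Finset.univ.filter
      (fun y : Fin k → Fin r → Fin n => finState r n Finset.univ k y = ∅)).card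
      = emptyCount r n Finset.univ k := by
    rw [emptyCount]
  rw [hcard]
  have hn0 : (0:ℝ) < (n:ℝ) := by exact_mod_cast hn
  have hpow : (0:ℝ) < ((n:ℝ)^r)^k := by positivity
  rw [Af, ENNReal.ofReal_div_of_pos hpow, div_eq_mul_inv]
  congr 1
  · exact (ENNReal.ofReal_natCast _).symm
  · rw [ENNReal.ofReal_pow (by positivity), ENNReal.ofReal_pow (n.cast_nonneg),
      ENNReal.ofReal_natCast, ← ENNReal.inv_pow]

lemma Af_mono {r : ℕ} {μ : Measure (ℕ → Fin r → Fin n)} [IsProbabilityMeasure μ]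
    (hn : 1 ≤ n)
    (hindep : iIndepFun (fun k (ω : ℕ → Fin r → Fin n) => ω k) μ)
    (hunif : ∀ (k : ℕ) (g : Fin r → Fin n), μ {ω | ω k = g} = ((n : ENNReal) ^ r)⁻¹) :
    Monotone (Af r n) := by
  have h : ∀ k, Af r n k = (μ {ω : ℕ → Fin r → Fin n | gameState r n ω k = ∅}).toReal := by
    intro k
    rw [meas_state_ofReal hn hindep hunif k, ENNReal.toReal_ofReal (Af_nonneg r k)]
  intro a b hab
  rw [h a, h b]
  exact ENNReal.toReal_mono (measure_ne_top μ _)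
    (measure_mono (fun ω hω => gameState_empty_mono ω hab hω))

lemma Af_succ (hn : 1 ≤ n) (r k : ℕ) :
    Af r n (k+1)
      = (∑ g : Fin r → Fin n, Af (remainingBalls r n Finset.univ g).card n k) / (n:ℝ)^r := by
  classical
  have hn0 : (0:ℝ) < (n:ℝ) := by exact_mod_cast hn
  have key : ∀ g : Fin r → Fin n,
      (emptyCount r n (remainingBalls r n Finset.univ g) k : ℝ) / ((n:ℝ)^r)^(k+1)
        = Af (remainingBalls r n Finset.univ g).card n k / (n:ℝ)^r := by
    intro g
    set S := remainingBalls r n Finset.univ g with hS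
    have hle : S.card ≤ r := by
      have := Finset.card_le_univ S
      simpa using this
    have hsplit : (n:ℝ)^r = (n:ℝ)^S.card * (n:ℝ)^(r - S.card) := by
      rw [← pow_add]
      congr 1
      omega
    rw [emptyCount_eq, Af]
    push_cast
    rw [hsplit]
    have h1 : (n:ℝ)^S.card ≠ 0 := by positivity
    have h2 : (n:ℝ)^(r - S.card) ≠ 0 := by positivity
    field_simp
    ring
  rw [Af, emptyCount_succ]
  push_cast
  rw [Finset.sum_div]
  rw [Finset.sum_congr rfl (fun g _ => key g), Finset.sum_div]

end

section
variable {n : ℕ}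

lemma card_rem_eq (r n : ℕ) (g : Fin r → Fin n) {t : ℕ}
    (ht : (Finset.univ.filter (fun b : Fin r => ∀ b' : Fin r, b' ≠ b → g b' ≠ g b)).card = t) :
    (remainingBalls r n Finset.univ g).card = r - t := by
  classical
  have hsplit := Finset.card_filter_add_card_filter_not
    (s := (Finset.univ : Finset (Fin r)))
    (p := fun b : Fin r => ∃ b' : Fin r, b' ≠ b ∧ g b' = g b)
  have h1 : remainingBalls r n Finset.univ g
      = Finset.univ.filter (fun b : Fin r => ∃ b' : Fin r, b' ≠ b ∧ g b' = g b) := by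
    rw [remainingBalls]
    apply Finset.filter_congr
    intro b _
    simp
  have h2 : Finset.univ.filter (fun b : Fin r => ¬ ∃ b' : Fin r, b' ≠ b ∧ g b' = g b)
      = Finset.univ.filter (fun b : Fin r => ∀ b' : Fin r, b' ≠ b → g b' ≠ g b) := by
    apply Finset.filter_congr
    intro b _
    push_neg
    rfl
  rw [h2, ht] at hsplit
  have hcard : (Finset.univ : Finset (Fin r)).card = r := by simp
  rw [hcard] at hsplit
  rw [h1]
  omega

lemma sum_group (r : ℕ) (h : ℕ → ℝ) :
    ∑ g : Fin r → Fin n, h (remainingBalls r n Finset.univ g).card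
      = ∑ t ∈ Finset.Icc 0 r, ((Finset.univ.filter (fun f : Fin r → Fin n =>
          (Finset.univ.filter
            (fun b : Fin r => ∀ b' : Fin r, b' ≠ b → f b' ≠ f b)).card = t)).card : ℝ)
          * h (r - t) := by
  classical
  rw [← Finset.sum_fiberwise_of_maps_to
    (g := fun g : Fin r → Fin n =>
      (Finset.univ.filter (fun b : Fin r => ∀ b' : Fin r, b' ≠ b → g b' ≠ g b)).card)
    (t := Finset.Icc 0 r) ?hmap
    (f := fun g : Fin r → Fin n => h (remainingBalls r n Finset.univ g).card)]
  · refine Finset.sum_congr rfl fun t _ => ?_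
    have hcg : ∀ g ∈ Finset.univ.filter (fun g : Fin r → Fin n =>
        (Finset.univ.filter
          (fun b : Fin r => ∀ b' : Fin r, b' ≠ b → g b' ≠ g b)).card = t),
        h (remainingBalls r n Finset.univ g).card = h (r - t) := by
      intro g hg
      simp only [Finset.mem_filter, Finset.mem_univ, true_and] at hg
      rw [card_rem_eq r n g hg]
    rw [Finset.sum_congr rfl hcg, Finset.sum_const, nsmul_eq_mul]
  case hmap =>
    intro g _
    simp only [Finset.mem_Icc]
    refine ⟨Nat.zero_le _, ?_⟩
    calc (Finset.univ.filter (fun b : Fin r => ∀ b' : Fin r, b' ≠ b → g b' ≠ g b)).card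
        ≤ (Finset.univ : Finset (Fin r)).card := Finset.card_filter_le _ _
      _ = r := by simp
end

open Filter in
lemma Af_tendsto {n : ℕ} (hn : 1 ≤ n)
    (μ : ∀ s : ℕ, Measure (ℕ → Fin s → Fin n)) (hprob : ∀ s, IsProbabilityMeasure (μ s))
    (hindep : ∀ s, iIndepFun (fun k (ω : ℕ → Fin s → Fin n) => ω k) (μ s))
    (hunif : ∀ s (k : ℕ) (g : Fin s → Fin n), μ s {ω | ω k = g} = ((n : ENNReal) ^ s)⁻¹) :
    ∀ r : ℕ, (2 ≤ n ∨ r ≤ 1) → Filter.Tendsto (Af r n) Filter.atTop (nhds 1) := by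
  intro r
  induction r using Nat.strong_induction_on with
  | _ r ih =>
    intro hcase
    rcases Nat.eq_zero_or_pos r with rfl | hr
    · have he : Af 0 n = fun _ => 1 := funext fun k => Af_zero k
      rw [he]
      exact tendsto_const_nhds
    haveI := hprob r
    have hmono : Monotone (Af r n) := Af_mono hn (hindep r) (hunif r)
    set v : ℕ → ℝ := fun k => 1 - Af r n k with hv
    have hanti : Antitone v := fun a b hab => by
      simp only [hv]
      exact sub_le_sub_left (hmono hab) 1
    have hvnn : ∀ k, 0 ≤ v k := fun k => by
      simp only [hv]
      have := Af_le_one hn r k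
      linarith
    have hbdd : BddBelow (Set.range v) := by
      refine ⟨0, ?_⟩
      rintro y ⟨k, rfl⟩
      exact hvnn k
    set L := ⨅ k, v k with hL
    have htend : Tendsto v atTop (nhds L) := tendsto_atTop_ciInf hanti hbdd
    have hn0 : (0:ℝ) < (n:ℝ) := by exact_mod_cast hn
    -- per-g limits
    have hglim : ∀ g : Fin r → Fin n,
        Tendsto (fun k => 1 - Af (remainingBalls r n Finset.univ g).card n k) atTop
          (nhds (if remainingBalls r n Finset.univ g = Finset.univ then L else 0)) := by
      intro g
      by_cases hst : remainingBalls r n Finset.univ g = Finset.univ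
      · rw [if_pos hst, hst]
        have : (Finset.univ : Finset (Fin r)).card = r := by simp
        rw [this]
        exact htend
      · rw [if_neg hst]
        have hlt : (remainingBalls r n Finset.univ g).card < r := by
          have hss : remainingBalls r n Finset.univ g ⊂ Finset.univ :=
            (Finset.subset_univ _).ssubset_of_ne hst
          have := Finset.card_lt_card hss
          simpa using this
        have hcase' : 2 ≤ n ∨ (remainingBalls r n Finset.univ g).card ≤ 1 := by
          rcases hcase with h2 | h1
          · exact Or.inl h2
          · exact Or.inr (by omega)
        have := ih _ hlt hcase'
        have h10 : (1:ℝ) - 1 = 0 := by norm_num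
        rw [← h10]
        exact tendsto_const_nhds.sub this
    -- identify v (k+1)
    have hrec : ∀ k : ℕ, v (k+1)
        = (∑ g : Fin r → Fin n, (1 - Af (remainingBalls r n Finset.univ g).card n k)) / (n:ℝ)^r := by
      intro k
      have hcardg : ((Finset.univ : Finset (Fin r → Fin n)).card : ℝ) = (n:ℝ)^r := by
        rw [Finset.card_univ, Fintype.card_fun]
        push_cast
        simp
      simp only [hv]
      rw [Af_succ hn r k, Finset.sum_sub_distrib, Finset.sum_const, nsmul_eq_mul, mul_one, hcardg,
        sub_div, div_self (by positivity)]
    have hsumlim : Tendsto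
        (fun k => (∑ g : Fin r → Fin n, (1 - Af (remainingBalls r n Finset.univ g).card n k)) / (n:ℝ)^r)
        atTop (nhds ((∑ g : Fin r → Fin n,
          (if remainingBalls r n Finset.univ g = Finset.univ then L else 0)) / (n:ℝ)^r)) := by
      exact (tendsto_finset_sum Finset.univ (fun g _ => hglim g)).div_const _
    have hshift : Tendsto (fun k => v (k+1)) atTop (nhds L) :=
      htend.comp (tendsto_add_atTop_nat 1)
    have hLrec : L = (∑ g : Fin r → Fin n,
        (if remainingBalls r n Finset.univ g = Finset.univ then L else 0)) / (n:ℝ)^r := by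
      refine tendsto_nhds_unique hshift ?_
      have : (fun k => v (k+1)) = (fun k =>
          (∑ g : Fin r → Fin n, (1 - Af (remainingBalls r n Finset.univ g).card n k)) / (n:ℝ)^r) :=
        funext hrec
      rw [this]
      exact hsumlim
    -- stay count
    classical
    have hsum_ite : (∑ g : Fin r → Fin n,
        (if remainingBalls r n Finset.univ g = Finset.univ then L else 0))
        = ((Finset.univ.filter (fun g : Fin r → Fin n =>
            remainingBalls r n Finset.univ g = Finset.univ)).card : ℝ) * L := by
      rw [Finset.sum_ite, Finset.sum_const, Finset.sum_const_zero, add_zero, nsmul_eq_mul]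
    -- witness
    have hwit : ∃ g0 : Fin r → Fin n, remainingBalls r n Finset.univ g0 ≠ Finset.univ := by
      have hb0 : (⟨0, hr⟩ : Fin r) ∈ (Finset.univ : Finset (Fin r)) := Finset.mem_univ _
      rcases hcase with h2 | h1
      · refine ⟨fun b => if b = ⟨0, hr⟩ then ⟨0, by omega⟩ else ⟨1, by omega⟩, fun hc => ?_⟩
        have : (⟨0, hr⟩ : Fin r) ∈ remainingBalls r n Finset.univ _ := hc ▸ hb0
        rw [remainingBalls, Finset.mem_filter] at this
        obtain ⟨-, b', -, hne, heq⟩ := this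
        rw [if_neg hne, if_pos rfl] at heq
        exact absurd (congrArg Fin.val heq) (by simp)
      · have hr1 : r = 1 := by omega
        subst hr1
        refine ⟨fun _ => ⟨0, hn⟩, fun hc => ?_⟩
        have : (⟨0, hr⟩ : Fin 1) ∈ remainingBalls 1 n Finset.univ _ := hc ▸ hb0
        rw [remainingBalls, Finset.mem_filter] at this
        obtain ⟨-, b', -, hne, -⟩ := this
        exact hne (Subsingleton.elim _ _)
    obtain ⟨g0, hg0⟩ := hwit
    have hcs : ((Finset.univ.filter (fun g : Fin r → Fin n =>
        remainingBalls r n Finset.univ g = Finset.univ)).card : ℝ) < (n:ℝ)^r := by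
      have hss : Finset.univ.filter (fun g : Fin r → Fin n =>
          remainingBalls r n Finset.univ g = Finset.univ) ⊂ Finset.univ := by
        refine Finset.ssubset_iff_of_subset (Finset.filter_subset _ _) |>.2 ?_
        exact ⟨g0, Finset.mem_univ _, by simp [hg0]⟩
      have h0 := Finset.card_lt_card hss
      rw [Finset.card_univ, Fintype.card_fun, Fintype.card_fin, Fintype.card_fin] at h0
      calc ((Finset.univ.filter (fun g : Fin r → Fin n =>
          remainingBalls r n Finset.univ g = Finset.univ)).card : ℝ) < ((n ^ r : ℕ) : ℝ) := by
            exact_mod_cast h0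
        _ = (n:ℝ)^r := by push_cast; ring
    -- conclude L = 0
    have hLnn : 0 ≤ L := le_ciInf hvnn
    have hL0 : L = 0 := by
      rw [hsum_ite] at hLrec
      set c := ((Finset.univ.filter (fun g : Fin r → Fin n =>
          remainingBalls r n Finset.univ g = Finset.univ)).card : ℝ)
      have hcnn : 0 ≤ c := Nat.cast_nonneg _
      have hq : c / (n:ℝ)^r < 1 := by
        rw [div_lt_one (by positivity)]
        exact hcs
      have : L * (1 - c / (n:ℝ)^r) = 0 := by
        rw [mul_sub, mul_one]
        rw [div_eq_mul_inv] at hLrec ⊢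
        nlinarith [hLrec]
      rcases mul_eq_zero.mp this with h | h
      · exact h
      · nlinarith
    have : Tendsto (fun k => 1 - v k) atTop (nhds 1) := by
      have h1 : Tendsto (fun _ : ℕ => (1:ℝ)) atTop (nhds 1) := tendsto_const_nhds
      have h2 := h1.sub htend
      rw [hL0, sub_zero] at h2
      exact h2
    have hfin : (fun k => 1 - v k) = Af r n := by
      funext k
      simp [hv]
    rw [← hfin]
    exact this

noncomputable def esF (n s : ℕ) : ℕ → ℝ
  | 0 => Af s n 0
  | (m+1) => Af s n (m+1) - Af s n m

lemma esF_zero (n s : ℕ) : esF n s 0 = Af s n 0 := rfl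
lemma esF_succ (n s m : ℕ) : esF n s (m+1) = Af s n (m+1) - Af s n m := rfl

/-- In the ball-and-cell game with `n` cells (for each `r`, the game with `r`
balls is played on its own probability space with i.i.d. uniform placements each round), the
probability generating functions `F_{r,n}(x) = E[x^{T_{r,n}}]` satisfy, for `|x| < 1` and
provided `P_{r,r}(n) < 1`, the recurrence
`F_{r,n}(x) = (x/(1 − P_{r,r}(n)·x)) · ∑_{t=1}^{r} P_{r,r−t}(n) · F_{r−t,n}(x)`,
with `F_{0,n}(x) = 1`. -/
theorem ball_cell_pgf_recurrence (n : ℕ) (hn : 1 ≤ n)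
    (μ : ∀ r : ℕ, Measure (ℕ → Fin r → Fin n)) (hprob : ∀ r, IsProbabilityMeasure (μ r))
    (hindep : ∀ r, iIndepFun (fun k ω => ω k) (μ r))
    (hunif : ∀ r (k : ℕ) (g : Fin r → Fin n), μ r {ω | ω k = g} = ((n : ENNReal) ^ r)⁻¹) :
    (∀ x : ℝ, ∫ ω, x ^ gameDuration 0 n ω ∂(μ 0) = 1) ∧
    (∀ x : ℝ, |x| < 1 → ∀ r : ℕ, 1 ≤ r → captureProb r n 0 < 1 →
      ∫ ω, x ^ gameDuration r n ω ∂(μ r) =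
        x / (1 - captureProb r n 0 * x) *
          ∑ t ∈ Finset.Icc 1 r,
            captureProb r n t * ∫ ω, x ^ gameDuration (r - t) n ω ∂(μ (r - t))) := by

  classical
  have hn0 : (0:ℝ) < (n:ℝ) := by exact_mod_cast hn
  have hpart1 : ∀ x : ℝ, ∫ ω, x ^ gameDuration 0 n ω ∂(μ 0) = 1 := by
    intro x
    haveI := hprob 0
    have hdur : ∀ ω : ℕ → Fin 0 → Fin n, gameDuration 0 n ω = 0 := by
      intro ω
      rw [gameDuration]
      refine Nat.sInf_eq_zero.2 (Or.inl ?_)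
      show gameState 0 n ω 0 = ∅
      rw [gameState]
      exact Finset.univ_eq_empty
    simp only [hdur, pow_zero]
    simp
  refine ⟨hpart1, ?_⟩
  intro x hx r hr hP0
  haveI := hprob r
  -- case analysis hypothesis
  have hcase : 2 ≤ n ∨ r ≤ 1 := by
    by_contra hc
    push_neg at hc
    obtain ⟨hn2, hr2⟩ := hc
    have hn1 : n = 1 := by omega
    have hr2' : 2 ≤ r := by omega
    subst hn1
    have hone : captureProb r 1 0 = 1 := by
      rw [captureProb]
      have hall : (Finset.univ.filter (fun f : Fin r → Fin 1 =>
          (Finset.univ.filter (fun b : Fin r => ∀ b' : Fin r, b' ≠ b → f b' ≠ f b)).card = 0))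
          = Finset.univ := by
        apply Finset.filter_true_of_mem
        intro f _
        rw [Finset.card_eq_zero, Finset.filter_eq_empty_iff]
        intro b _
        push_neg
        by_cases hb : b = ⟨0, by omega⟩
        · refine ⟨⟨1, by omega⟩, ?_, Subsingleton.elim _ _⟩
          rw [hb]
          intro h
          exact absurd (congrArg Fin.val h) (by simp)
        · exact ⟨⟨0, by omega⟩, fun h => hb h.symm, Subsingleton.elim _ _⟩
      rw [hall]
      simp [Finset.card_univ, Fintype.card_fun]
    rw [hone] at hP0
    exact absurd hP0 (lt_irrefl 1)
  -- monotonicity of Af for every s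
  have hAf_mono : ∀ s : ℕ, Monotone (Af s n) := fun s => by
    haveI := hprob s
    exact Af_mono hn (hindep s) (hunif s)
  have hes_nonneg : ∀ s m, 0 ≤ esF n s m := by
    intro s m
    cases m with
    | zero => exact Af_nonneg s 0
    | succ m => exact sub_nonneg.2 (hAf_mono s (Nat.le_succ m))
  have hes_range : ∀ s K, ∑ m ∈ Finset.range K, esF n s m ≤ 1 := by
    intro s K
    have hkey : ∀ K', ∑ m ∈ Finset.range (K'+1), esF n s m = Af s n K' := by
      intro K'
      induction K' with
      | zero => simp [esF_zero]
      | succ K' ih => rw [Finset.sum_range_succ, ih, esF_succ]; ring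
    cases K with
    | zero => simp
    | succ K => rw [hkey K]; exact Af_le_one hn s K
  have hes_summable : ∀ s, Summable (fun m => esF n s m * x ^ m) := by
    intro s
    have h1 : Summable (esF n s) := summable_of_sum_range_le (hes_nonneg s) (hes_range s)
    refine Summable.of_norm_bounded h1 fun m => ?_
    rw [norm_mul, norm_pow, Real.norm_eq_abs, Real.norm_eq_abs,
      abs_of_nonneg (hes_nonneg s m)]
    calc esF n s m * |x| ^ m ≤ esF n s m * 1 := by
          have := pow_le_one₀ (abs_nonneg x) hx.le (n := m)
          exact mul_le_mul_of_nonneg_left this (hes_nonneg s m)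
      _ = esF n s m := mul_one _
  -- E s = F s
  have hE_eq_F : ∀ s : ℕ, (2 ≤ n ∨ s ≤ 1) →
      (∑' m : ℕ, esF n s m * x ^ m) = ∫ ω, x ^ gameDuration s n ω ∂(μ s) := by
    intro s hcs
    rcases Nat.eq_zero_or_pos s with rfl | hs
    · rw [hpart1 x, (hes_summable 0).tsum_eq_zero_add]
      have hz : ∀ m : ℕ, esF n 0 (m+1) * x^(m+1) = 0 := by
        intro m
        rw [esF_succ, Af_zero, Af_zero]
        ring
      rw [tsum_congr hz, tsum_zero, esF_zero, Af_zero]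
      ring
    · haveI := hprob s
      rw [integral_pow_dur hs hx]
      refine (tsum_congr fun m => ?_).symm
      have hofq : ∀ k, μ s {ω : ℕ → Fin s → Fin n | gameState s n ω k = ∅}
          = ENNReal.ofReal (Af s n k) := meas_state_ofReal hn (hindep s) (hunif s)
      cases m with
      | zero =>
          have hmono' : Monotone (fun k => μ s {ω : ℕ → Fin s → Fin n | gameState s n ω k = ∅}) :=
            fun a b hab => measure_mono (fun ω h => gameState_empty_mono ω hab h)
          have ht1 : Filter.Tendsto (fun k => μ s {ω : ℕ → Fin s → Fin n | gameState s n ω k = ∅})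
              Filter.atTop (nhds 1) := by
            have h2 : Filter.Tendsto (fun k => ENNReal.ofReal (Af s n k)) Filter.atTop
                (nhds (ENNReal.ofReal 1)) :=
              (ENNReal.continuous_ofReal.tendsto 1).comp
                (Af_tendsto hn μ hprob hindep hunif s hcs)
            rw [ENNReal.ofReal_one] at h2
            have heq : (fun k => μ s {ω : ℕ → Fin s → Fin n | gameState s n ω k = ∅})
                = fun k => ENNReal.ofReal (Af s n k) := funext hofq
            rw [heq]
            exact h2
          have hsup : ⨆ k, μ s {ω : ℕ → Fin s → Fin n | gameState s n ω k = ∅} = 1 :=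
            tendsto_nhds_unique (tendsto_atTop_iSup hmono') ht1
          rw [meas_dur_zero hs, hsup, tsub_self]
          simp [esF_zero, Af_r_zero hs]
      | succ m =>
          rw [meas_dur_succ, hofq, hofq,
            ← ENNReal.ofReal_sub _ (Af_nonneg s m),
            ENNReal.toReal_ofReal (sub_nonneg.2 (hAf_mono s (Nat.le_succ m))), esF_succ]
  -- coefficient recurrence
  have hcoef : ∀ m : ℕ, esF n r (m+1)
      = (∑ g : Fin r → Fin n, esF n (remainingBalls r n Finset.univ g).card m) / (n:ℝ)^r := by
    intro m
    cases m with
    | zero =>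
        rw [esF_succ, Af_r_zero hr, sub_zero, Af_succ hn r 0]
        congr 1
    | succ m =>
        rw [esF_succ, Af_succ hn r (m+1), Af_succ hn r m, div_sub_div_same,
          ← Finset.sum_sub_distrib]
        congr 1
  -- master identity
  have hstep1 : ∫ ω, x ^ gameDuration r n ω ∂(μ r) = ∑' m : ℕ, esF n r m * x ^ m :=
    (hE_eq_F r hcase).symm
  have hshift : ∑' m : ℕ, esF n r m * x ^ m
      = x * ∑' m : ℕ, esF n r (m+1) * x ^ m := by
    rw [(hes_summable r).tsum_eq_zero_add, esF_zero, Af_r_zero hr, zero_mul, zero_add,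
      ← tsum_mul_left]
    refine tsum_congr fun m => ?_
    rw [pow_succ]
    ring
  have hswap : ∑' m : ℕ, esF n r (m+1) * x ^ m
      = (∑ g : Fin r → Fin n,
          ∑' m : ℕ, esF n (remainingBalls r n Finset.univ g).card m * x ^ m) / (n:ℝ)^r := by
    have hterm : ∀ m : ℕ, esF n r (m+1) * x ^ m
        = ∑ g : Fin r → Fin n,
            (esF n (remainingBalls r n Finset.univ g).card m * x ^ m) / (n:ℝ)^r := by
      intro m
      rw [hcoef m, div_mul_eq_mul_div, Finset.sum_mul, Finset.sum_div]
    rw [tsum_congr hterm, Summable.tsum_finsetSum (fun g _ => ((hes_summable _).div_const _)),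
      Finset.sum_div]
    refine Finset.sum_congr rfl fun g _ => ?_
    rw [tsum_div_const]
  have hFs : ∀ g : Fin r → Fin n,
      ∑' m : ℕ, esF n (remainingBalls r n Finset.univ g).card m * x ^ m
        = ∫ ω, x ^ gameDuration ((remainingBalls r n Finset.univ g).card) n ω
            ∂(μ ((remainingBalls r n Finset.univ g).card)) := by
    intro g
    refine hE_eq_F _ ?_
    rcases hcase with h2 | h1
    · exact Or.inl h2
    · refine Or.inr ?_
      have : (remainingBalls r n Finset.univ g).card ≤ r := by
        have := Finset.card_le_univ (remainingBalls r n Finset.univ g)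
        simpa using this
      omega
  have hgroup : (∑ g : Fin r → Fin n,
      ∫ ω, x ^ gameDuration ((remainingBalls r n Finset.univ g).card) n ω
          ∂(μ ((remainingBalls r n Finset.univ g).card)))
      = ∑ t ∈ Finset.Icc 0 r, ((Finset.univ.filter (fun f : Fin r → Fin n =>
          (Finset.univ.filter
            (fun b : Fin r => ∀ b' : Fin r, b' ≠ b → f b' ≠ f b)).card = t)).card : ℝ)
          * ∫ ω, x ^ gameDuration (r - t) n ω ∂(μ (r - t)) :=
    sum_group r (fun s => ∫ ω, x ^ gameDuration s n ω ∂(μ s))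
  -- combine
  have hmainraw : ∫ ω, x ^ gameDuration r n ω ∂(μ r)
      = x * ((∑ t ∈ Finset.Icc 0 r, ((Finset.univ.filter (fun f : Fin r → Fin n =>
          (Finset.univ.filter
            (fun b : Fin r => ∀ b' : Fin r, b' ≠ b → f b' ≠ f b)).card = t)).card : ℝ)
          * ∫ ω, x ^ gameDuration (r - t) n ω ∂(μ (r - t))) / (n:ℝ)^r) := by
    rw [hstep1, hshift, hswap, Finset.sum_congr rfl (fun g _ => hFs g), hgroup]
  -- split t = 0 and convert to captureProb
  have hicc : Finset.Icc 0 r = insert 0 (Finset.Icc 1 r) := by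
    ext t
    simp only [Finset.mem_Icc, Finset.mem_insert]
    omega
  have hnotmem : (0:ℕ) ∉ Finset.Icc 1 r := by simp
  have hcap : ∀ t : ℕ, ((Finset.univ.filter (fun f : Fin r → Fin n =>
      (Finset.univ.filter
        (fun b : Fin r => ∀ b' : Fin r, b' ≠ b → f b' ≠ f b)).card = t)).card : ℝ)
      = captureProb r n t * (n:ℝ)^r := by
    intro t
    rw [captureProb, div_mul_cancel₀]
    positivity
  have hRHS : (∑ t ∈ Finset.Icc 0 r, ((Finset.univ.filter (fun f : Fin r → Fin n =>
          (Finset.univ.filter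
            (fun b : Fin r => ∀ b' : Fin r, b' ≠ b → f b' ≠ f b)).card = t)).card : ℝ)
          * ∫ ω, x ^ gameDuration (r - t) n ω ∂(μ (r - t))) / (n:ℝ)^r
      = captureProb r n 0 * ∫ ω, x ^ gameDuration r n ω ∂(μ r)
          + ∑ t ∈ Finset.Icc 1 r,
              captureProb r n t * ∫ ω, x ^ gameDuration (r - t) n ω ∂(μ (r - t)) := by
    rw [hicc, Finset.sum_insert hnotmem, add_div]
    congr 1
    · rw [hcap 0]
      have h0 : r - 0 = r := rfl
      rw [h0]
      field_simp
      try ring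
    · rw [Finset.sum_div]
      refine Finset.sum_congr rfl fun t _ => ?_
      rw [hcap t]
      field_simp
      try ring
  have hmain : ∫ ω, x ^ gameDuration r n ω ∂(μ r)
      = x * (captureProb r n 0 * ∫ ω, x ^ gameDuration r n ω ∂(μ r)
          + ∑ t ∈ Finset.Icc 1 r,
              captureProb r n t * ∫ ω, x ^ gameDuration (r - t) n ω ∂(μ (r - t))) :=
    hmainraw.trans (by rw [hRHS])
  -- final algebra
  have hP0nn : 0 ≤ captureProb r n 0 := by
    rw [captureProb]
    exact div_nonneg (Nat.cast_nonneg _) (pow_nonneg (Nat.cast_nonneg _) _)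
  have hlt1 : captureProb r n 0 * x < 1 := by
    calc captureProb r n 0 * x ≤ |captureProb r n 0 * x| := le_abs_self _
      _ = captureProb r n 0 * |x| := by rw [abs_mul, abs_of_nonneg hP0nn]
      _ ≤ captureProb r n 0 * 1 := mul_le_mul_of_nonneg_left hx.le hP0nn
      _ = captureProb r n 0 := mul_one _
      _ < 1 := hP0
  have hne : 1 - captureProb r n 0 * x ≠ 0 := by
    have : 0 < 1 - captureProb r n 0 * x := by linarith
    exact ne_of_gt this
  rw [div_mul_eq_mul_div, eq_div_iff hne]
  linear_combination hmain
end

section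
/- For the ball-and-cell game with 3 balls and 3 cells, the probability generating function of the duration is F(x) = 2x(5x+3)/((3−x)(9−x)). -/
open MeasureTheory ProbabilityTheory Finset

abbrev E3 := Fin 3 → Fin 3

lemma gameState_congr : ∀ {n : ℕ} {ω ω' : ℕ → E3}, (∀ k, k < n → ω k = ω' k) →
    gameState 3 3 ω n = gameState 3 3 ω' n
  | 0, _, _, _ => rfl
  | n+1, ω, ω', h => by
    simp only [gameState]
    rw [gameState_congr (fun k hk => h k (hk.trans (Nat.lt_succ_self n))), h n (Nat.lt_succ_self n)]

lemma measurableSet_coord (k : ℕ) (e : E3) : MeasurableSet {ω : ℕ → E3 | ω k = e} := by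
  have h : {ω : ℕ → E3 | ω k = e} = (fun ω : ℕ → E3 => ω k) ⁻¹' {e} := rfl
  rw [h]; exact (measurable_pi_apply k) (measurableSet_singleton e)

def cylSet (n : ℕ) (c : ℕ → E3) : Set (ℕ → E3) := ⋂ k ∈ Finset.range n, {ω | ω k = c k}

lemma mem_cylSet {n : ℕ} {c : ℕ → E3} {ω : ℕ → E3} :
    ω ∈ cylSet n c ↔ ∀ k, k < n → ω k = c k := by simp [cylSet]

lemma measurableSet_cylSet (n : ℕ) (c : ℕ → E3) : MeasurableSet (cylSet n c) :=
  MeasurableSet.biInter (Finset.range n).countable_toSet fun k _ => measurableSet_coord k (c k)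

section
variable {μ : Measure (ℕ → E3)} [IsProbabilityMeasure μ]
  (hindep : iIndepFun (fun k (ω : ℕ → E3) => ω k) μ)
  (hunif : ∀ (k : ℕ) (g : E3), μ {ω | ω k = g} = ((3 : ENNReal) ^ 3)⁻¹)

include hindep hunif in
lemma meas_cylSet (n : ℕ) (c : ℕ → E3) : μ (cylSet n c) = (27 : ENNReal)⁻¹ ^ n := by
  have h := hindep.measure_inter_preimage_eq_mul (S := Finset.range n)
    (sets := fun k => {c k}) (fun i _ => measurableSet_singleton _)
  have hpre : ∀ k : ℕ, (fun ω : ℕ → E3 => ω k) ⁻¹' {c k} = {ω | ω k = c k} := fun k => rfl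
  simp only [hpre] at h
  rw [cylSet, h, Finset.prod_congr rfl (fun k _ => hunif k (c k)), Finset.prod_const,
    Finset.card_range]
  norm_num

set_option linter.unusedSectionVars false

def extFn (n : ℕ) (g : Fin n → E3) : ℕ → E3 := fun k => if h : k < n then g ⟨k, h⟩ else (fun _ => 0)

def GSet (n : ℕ) (S : Finset (Fin 3)) : Finset (Fin n → E3) :=
  Finset.univ.filter fun g => gameState 3 3 (extFn n g) n = S

lemma state_eq_biUnion (n : ℕ) (S : Finset (Fin 3)) :
    {ω : ℕ → E3 | gameState 3 3 ω n = S} = ⋃ g ∈ GSet n S, cylSet n (extFn n g) := by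
  ext ω
  simp only [Set.mem_setOf_eq, Set.mem_iUnion, mem_cylSet, GSet, Finset.mem_filter,
    Finset.mem_univ, true_and, exists_prop]
  constructor
  · intro h
    refine ⟨fun i => ω i, ?_, ?_⟩
    · rw [← h]; exact gameState_congr (fun k hk => by simp [extFn, hk])
    · intro k hk; simp [extFn, hk]
  · rintro ⟨g, hg, hω⟩
    rw [← hg]
    exact gameState_congr (fun k hk => hω k hk)

lemma measurableSet_state (n : ℕ) (S : Finset (Fin 3)) :
    MeasurableSet {ω : ℕ → E3 | gameState 3 3 ω n = S} := by
  rw [state_eq_biUnion]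
  exact (GSet n S).measurableSet_biUnion fun g _ => measurableSet_cylSet n (extFn n g)

lemma cyl_ext_disjoint (n : ℕ) : ∀ g1 g2 : Fin n → E3, g1 ≠ g2 →
    Disjoint (cylSet n (extFn n g1)) (cylSet n (extFn n g2)) := by
  intro g1 g2 hne
  rw [Set.disjoint_left]
  intro ω h1 h2
  rw [mem_cylSet] at h1 h2
  exact hne (funext fun i => by
    have e1 := h1 i i.isLt
    have e2 := h2 i i.isLt
    simp only [extFn, i.isLt, dif_pos] at e1 e2
    rw [← e1, e2])

include hindep hunif in
lemma meas_state (n : ℕ) (S : Finset (Fin 3)) :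
    μ {ω : ℕ → E3 | gameState 3 3 ω n = S} = (GSet n S).card * (27 : ENNReal)⁻¹ ^ n := by
  rw [state_eq_biUnion, measure_biUnion_finset
    (fun g1 _ g2 _ hne => cyl_ext_disjoint n g1 g2 hne)
    (fun g _ => measurableSet_cylSet n (extFn n g))]
  rw [Finset.sum_congr rfl (fun g _ => meas_cylSet hindep hunif n (extFn n g)),
    Finset.sum_const, nsmul_eq_mul]

include hindep hunif in
lemma meas_state_inter (n : ℕ) (S : Finset (Fin 3)) (e : E3) :
    μ ({ω : ℕ → E3 | gameState 3 3 ω n = S} ∩ {ω | ω n = e})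
      = μ {ω : ℕ → E3 | gameState 3 3 ω n = S} * (27 : ENNReal)⁻¹ := by
  have hcyl : ∀ g : Fin n → E3, cylSet n (extFn n g) ∩ {ω : ℕ → E3 | ω n = e}
      = cylSet (n+1) (Function.update (extFn n g) n e) := by
    intro g
    ext ω
    simp only [Set.mem_inter_iff, mem_cylSet, Set.mem_setOf_eq]
    constructor
    · rintro ⟨h1, h2⟩ k hk
      rcases Nat.lt_succ_iff_lt_or_eq.mp hk with hk' | rfl
      · rw [Function.update_of_ne (Nat.ne_of_lt hk'), h1 k hk']
      · rw [Function.update_self, h2]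
    · intro h
      refine ⟨fun k hk => ?_, ?_⟩
      · have := h k (hk.trans (Nat.lt_succ_self n))
        rwa [Function.update_of_ne (Nat.ne_of_lt hk)] at this
      · have := h n (Nat.lt_succ_self n)
        rwa [Function.update_self] at this
  rw [state_eq_biUnion, Set.iUnion₂_inter]
  simp only [hcyl]
  rw [measure_biUnion_finset (fun g1 _ g2 _ hne => ?_) (fun g _ => measurableSet_cylSet _ _)]
  · rw [Finset.sum_congr rfl (fun g _ => meas_cylSet hindep hunif (n+1) _), Finset.sum_const,
      nsmul_eq_mul, ← state_eq_biUnion, meas_state hindep hunif n S, pow_succ, mul_assoc]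
  · -- disjointness
    show Disjoint (cylSet (n+1) _) (cylSet (n+1) _)
    rw [← hcyl, ← hcyl]
    exact (cyl_ext_disjoint n g1 g2 hne).mono Set.inter_subset_left Set.inter_subset_left


def tcnt (S T : Finset (Fin 3)) : ℕ := (Finset.univ.filter fun e : E3 => remainingBalls 3 3 S e = T).card

include hindep hunif in
lemma meas_step (n : ℕ) (T : Finset (Fin 3)) :
    μ {ω : ℕ → E3 | gameState 3 3 ω (n+1) = T}
      = ∑ S : Finset (Fin 3), μ {ω : ℕ → E3 | gameState 3 3 ω n = S} * tcnt S T * (27:ENNReal)⁻¹ := by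
  classical
  set P : Finset (Finset (Fin 3) × E3) :=
    Finset.univ.filter (fun p => remainingBalls 3 3 p.1 p.2 = T) with hP
  have hdec : {ω : ℕ → E3 | gameState 3 3 ω (n+1) = T}
      = ⋃ p ∈ P, ({ω : ℕ → E3 | gameState 3 3 ω n = p.1} ∩ {ω | ω n = p.2}) := by
    ext ω
    simp only [Set.mem_setOf_eq, Set.mem_iUnion, Set.mem_inter_iff, hP, Finset.mem_filter,
      Finset.mem_univ, true_and, exists_prop]
    constructor
    · intro h
      exact ⟨(gameState 3 3 ω n, ω n), h, rfl, rfl⟩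
    · rintro ⟨p, hp, h1, h2⟩
      show remainingBalls 3 3 (gameState 3 3 ω n) (ω n) = T
      rw [h1, h2, hp]
  rw [hdec, measure_biUnion_finset]
  · have hterm : ∀ p ∈ P, μ ({ω : ℕ → E3 | gameState 3 3 ω n = p.1} ∩ {ω | ω n = p.2})
        = μ {ω : ℕ → E3 | gameState 3 3 ω n = p.1} * (27:ENNReal)⁻¹ :=
      fun p _ => meas_state_inter hindep hunif n p.1 p.2
    rw [Finset.sum_congr rfl hterm, hP, Finset.sum_filter, Fintype.sum_prod_type]
    refine Finset.sum_congr rfl (fun S _ => ?_)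
    simp only []
    rw [← Finset.sum_filter, Finset.sum_const, nsmul_eq_mul, tcnt, mul_assoc]
    ring
  · intro p1 h1 p2 h2 hne
    show Disjoint _ _
    rw [Set.disjoint_left]
    rintro ω ⟨ha1, ha2⟩ ⟨hb1, hb2⟩
    exact hne (Prod.ext (by rw [← ha1, ← hb1]) (by rw [← Set.mem_setOf_eq.mp ha2, ← Set.mem_setOf_eq.mp hb2]))
  · exact fun p _ => (measurableSet_state n p.1).inter (measurableSet_coord n p.2)


lemma tcnt_univ_univ : tcnt Finset.univ Finset.univ = 3 := by decide
lemma tcnt_ne_univ : ∀ S : Finset (Fin 3), S ≠ Finset.univ → tcnt S Finset.univ = 0 := by decide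
lemma tcnt_univ_two : ∀ S : Finset (Fin 3), S.card = 2 → tcnt Finset.univ S = 6 := by decide
lemma tcnt_two_self : ∀ S : Finset (Fin 3), S.card = 2 → tcnt S S = 9 := by decide
lemma tcnt_zero : ∀ S T : Finset (Fin 3), T ≠ ∅ → T ≠ S → S ≠ Finset.univ → tcnt S T = 0 := by
  decide

lemma state_card_ne_one : ∀ (n : ℕ) (ω : ℕ → E3), (gameState 3 3 ω n).card ≠ 1
  | 0, ω => by simp [gameState]
  | n+1, ω => by
    have h : ∀ (S : Finset (Fin 3)) (f : E3), (remainingBalls 3 3 S f).card ≠ 1 := by decide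
    exact h _ _

include hindep hunif in
lemma meas_closed (n : ℕ) :
    μ {ω : ℕ → E3 | gameState 3 3 ω n = Finset.univ} = ((3^n : ℕ) : ENNReal) * (27:ENNReal)⁻¹ ^ n
    ∧ ∀ S : Finset (Fin 3), S.card = 2 →
      μ {ω : ℕ → E3 | gameState 3 3 ω n = S} = ((3^n * (3^n - 1) : ℕ) : ENNReal) * (27:ENNReal)⁻¹ ^ n := by
  induction n with
  | zero =>
    constructor
    · simp [gameState]
    · intro S hS
      have hne : Finset.univ ≠ S := by
        intro h; rw [← h] at hS; simp [Finset.card_univ] at hS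
      have : {ω : ℕ → E3 | gameState 3 3 ω 0 = S} = ∅ := by
        ext ω; simp [gameState, hne]
      simp [this]
  | succ n ih =>
    obtain ⟨hu, hw⟩ := ih
    constructor
    · rw [meas_step hindep hunif n Finset.univ]
      have hterm : ∀ S ∈ (Finset.univ : Finset (Finset (Fin 3))),
          μ {ω : ℕ → E3 | gameState 3 3 ω n = S} * (tcnt S Finset.univ : ENNReal) * (27:ENNReal)⁻¹
          = if S = Finset.univ then ((3^n : ℕ) : ENNReal) * (27:ENNReal)⁻¹ ^ n * 3 * (27:ENNReal)⁻¹ else 0 := by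
        intro S _
        by_cases h : S = Finset.univ
        · subst h; rw [hu, tcnt_univ_univ, if_pos rfl]; norm_num
        · rw [tcnt_ne_univ S h, if_neg h]; simp
      rw [Finset.sum_congr rfl hterm, Finset.sum_ite_eq' Finset.univ, if_pos (Finset.mem_univ _)]
      push_cast
      rw [pow_succ, pow_succ]
      ring
    · intro S' hS'
      rw [meas_step hindep hunif n S']
      have hne1 : Finset.univ ≠ S' := by
        intro h; rw [← h] at hS'; simp [Finset.card_univ] at hS'
      have hne2 : S' ≠ ∅ := by
        intro h; rw [h] at hS'; simp at hS'
      have hterm : ∀ S ∈ (Finset.univ : Finset (Finset (Fin 3))),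
          μ {ω : ℕ → E3 | gameState 3 3 ω n = S} * (tcnt S S' : ENNReal) * (27:ENNReal)⁻¹
          = (if S = Finset.univ then ((3^n : ℕ) : ENNReal) * (27:ENNReal)⁻¹ ^ n * 6 * (27:ENNReal)⁻¹ else 0)
            + (if S = S' then ((3^n * (3^n - 1) : ℕ) : ENNReal) * (27:ENNReal)⁻¹ ^ n * 9 * (27:ENNReal)⁻¹ else 0) := by
        intro S _
        by_cases h1 : S = Finset.univ
        · subst h1
          rw [hu, tcnt_univ_two S' hS', if_pos rfl, if_neg hne1]
          norm_num
        · by_cases h2 : S = S'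
          · subst h2
            rw [hw S hS', tcnt_two_self S hS', if_neg h1, if_pos rfl]
            norm_num
          · rw [tcnt_zero S S' hne2 (Ne.symm h2) h1, if_neg h1, if_neg h2]
            simp
      rw [Finset.sum_congr rfl hterm, Finset.sum_add_distrib,
        Finset.sum_ite_eq' Finset.univ, Finset.sum_ite_eq' Finset.univ,
        if_pos (Finset.mem_univ _), if_pos (Finset.mem_univ _)]
      obtain ⟨k, hk⟩ : ∃ k, 3^n = k + 1 := ⟨3^n - 1, by
        have : 1 ≤ 3^n := Nat.one_le_pow n 3 (by norm_num); omega⟩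
      have h3 : (3:ℕ)^(n+1) = 3 * k + 3 := by rw [pow_succ, hk]; ring
      rw [hk, h3]
      have e1 : k + 1 - 1 = k := by omega
      have e2 : 3*k+3-1 = 3*k+2 := by omega
      rw [e1, e2]
      push_cast
      rw [pow_succ]
      ring


lemma measurableSet_ne_empty (n : ℕ) :
    MeasurableSet {ω : ℕ → E3 | gameState 3 3 ω n ≠ ∅} := by
  have h : {ω : ℕ → E3 | gameState 3 3 ω n ≠ ∅} = {ω : ℕ → E3 | gameState 3 3 ω n = ∅}ᶜ := rfl
  rw [h]; exact (measurableSet_state n ∅).compl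

include hindep hunif in
lemma meas_ne_empty (n : ℕ) :
    μ {ω : ℕ → E3 | gameState 3 3 ω n ≠ ∅}
      = ((3^n * (3 * 3^n - 2) : ℕ) : ENNReal) * (27:ENNReal)⁻¹ ^ n := by
  obtain ⟨hu, hw⟩ := meas_closed hindep hunif n
  classical
  have hdec : {ω : ℕ → E3 | gameState 3 3 ω n ≠ ∅}
      = ⋃ S ∈ Finset.univ.filter (fun S : Finset (Fin 3) => S ≠ ∅),
          {ω : ℕ → E3 | gameState 3 3 ω n = S} := by
    ext ω
    simp only [Set.mem_setOf_eq, Set.mem_iUnion, Finset.mem_filter, Finset.mem_univ, true_and,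
      exists_prop]
    exact ⟨fun h => ⟨gameState 3 3 ω n, h, rfl⟩, fun ⟨S, hS, h⟩ => h ▸ hS⟩
  rw [hdec, measure_biUnion_finset]
  · have hterm : ∀ S ∈ Finset.univ.filter (fun S : Finset (Fin 3) => S ≠ ∅),
        μ {ω : ℕ → E3 | gameState 3 3 ω n = S}
        = (if S = Finset.univ then ((3^n : ℕ) : ENNReal) * (27:ENNReal)⁻¹ ^ n else 0)
          + (if S.card = 2 then ((3^n * (3^n - 1) : ℕ) : ENNReal) * (27:ENNReal)⁻¹ ^ n else 0) := by
      intro S hS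
      rw [Finset.mem_filter] at hS
      have hne : S ≠ ∅ := hS.2
      have hcard : S.card ≤ 3 := by
        have := Finset.card_le_univ S; simpa using this
      interval_cases h : S.card
      · exact absurd (Finset.card_eq_zero.mp h) hne
      · -- card 1 : measure zero
        have hempty : {ω : ℕ → E3 | gameState 3 3 ω n = S} = ∅ := by
          ext ω; simp only [Set.mem_setOf_eq, Set.mem_empty_iff_false, iff_false]
          intro hc; exact state_card_ne_one n ω (hc ▸ h)
        have h1 : S ≠ Finset.univ := fun he => by rw [he] at h; simp [Finset.card_univ] at h
        rw [hempty, if_neg h1, if_neg (by omega : ¬ (1:ℕ) = 2)]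
        simp
      · have h1 : S ≠ Finset.univ := fun he => by rw [he] at h; simp [Finset.card_univ] at h
        rw [hw S h, if_neg h1, if_pos rfl, zero_add]
      · have h1 : S = Finset.univ := Finset.eq_univ_of_card S (by rw [h, Fintype.card_fin])
        subst h1
        rw [hu, if_pos rfl]
        norm_num
    have hzero : ∀ S ∈ (Finset.univ : Finset (Finset (Fin 3))),
        S ∉ Finset.univ.filter (fun S : Finset (Fin 3) => S ≠ ∅) →
        ((if S = Finset.univ then ((3^n : ℕ) : ENNReal) * (27:ENNReal)⁻¹ ^ n else 0)
          + (if S.card = 2 then ((3^n * (3^n - 1) : ℕ) : ENNReal) * (27:ENNReal)⁻¹ ^ n else 0)) = 0 := by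
      intro S _ hS
      simp only [Finset.mem_filter, Finset.mem_univ, true_and, not_not] at hS
      subst hS
      rw [if_neg (by decide : ¬ (∅ : Finset (Fin 3)) = Finset.univ),
        if_neg (by decide : ¬ (∅ : Finset (Fin 3)).card = 2)]
      simp
    rw [Finset.sum_congr rfl hterm,
      Finset.sum_subset (Finset.filter_subset (fun S : Finset (Fin 3) => S ≠ ∅) Finset.univ) hzero,
      Finset.sum_add_distrib, Finset.sum_ite_eq' Finset.univ, if_pos (Finset.mem_univ _),
      ← Finset.sum_filter, Finset.sum_const]
    have hcard3 : (Finset.univ.filter (fun S : Finset (Fin 3) => S.card = 2)).card = 3 := by decide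
    rw [hcard3]
    obtain ⟨k, hk⟩ : ∃ k, (3:ℕ)^n = k + 1 := ⟨3^n - 1, by
      have : 1 ≤ (3:ℕ)^n := Nat.one_le_pow n 3 (by norm_num); omega⟩
    rw [hk]
    have e1 : k + 1 - 1 = k := by omega
    have e2 : 3 * (k+1) - 2 = 3*k+1 := by omega
    rw [e1, e2]
    push_cast
    ring
  · intro S1 h1 S2 h2 hne
    show Disjoint _ _
    rw [Set.disjoint_left]
    intro ω ha hb
    exact hne (by rw [← Set.mem_setOf_eq.mp ha, ← Set.mem_setOf_eq.mp hb])
  · exact fun S _ => measurableSet_state n S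


lemma state_empty_succ (ω : ℕ → E3) (n : ℕ) (h : gameState 3 3 ω n = ∅) :
    gameState 3 3 ω (n+1) = ∅ := by
  show remainingBalls 3 3 (gameState 3 3 ω n) (ω n) = ∅
  rw [h]; rfl

lemma state_absorb (ω : ℕ → E3) {n m : ℕ} (hnm : n ≤ m) (h : gameState 3 3 ω n = ∅) :
    gameState 3 3 ω m = ∅ := by
  induction m, hnm using Nat.le_induction with
  | base => exact h
  | succ m hm ih => exact state_empty_succ ω m ih

lemma state_zero_ne (ω : ℕ → E3) : gameState 3 3 ω 0 ≠ ∅ := by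
  show (Finset.univ : Finset (Fin 3)) ≠ ∅
  decide

lemma duration_event (m : ℕ) :
    {ω : ℕ → E3 | gameDuration 3 3 ω = m + 1}
      = {ω : ℕ → E3 | gameState 3 3 ω m ≠ ∅} \ {ω : ℕ → E3 | gameState 3 3 ω (m+1) ≠ ∅} := by
  ext ω
  simp only [Set.mem_setOf_eq, Set.mem_diff, not_not]
  constructor
  · intro h
    have hne : {k | gameState 3 3 ω k = ∅}.Nonempty := by
      by_contra hc
      rw [Set.not_nonempty_iff_eq_empty] at hc
      rw [gameDuration, hc, Nat.sInf_empty] at h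
      omega
    have h1 : gameState 3 3 ω (gameDuration 3 3 ω) = ∅ := Nat.sInf_mem hne
    rw [h] at h1
    refine ⟨?_, h1⟩
    intro hm
    have := Nat.sInf_le (show m ∈ {k | gameState 3 3 ω k = ∅} from hm)
    rw [show sInf {k | gameState 3 3 ω k = ∅} = gameDuration 3 3 ω from rfl, h] at this
    omega
  · rintro ⟨h1, h2⟩
    have hub : ∀ j ∈ {k | gameState 3 3 ω k = ∅}, m + 1 ≤ j := by
      intro j hj
      by_contra hc
      exact h1 (state_absorb ω (by omega : j ≤ m) hj)
    exact le_antisymm (Nat.sInf_le h2) (le_csInf ⟨m+1, h2⟩ hub)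

lemma duration_zero_subset (n : ℕ) :
    {ω : ℕ → E3 | gameDuration 3 3 ω = 0} ⊆ {ω : ℕ → E3 | gameState 3 3 ω n ≠ ∅} := by
  intro ω h
  simp only [Set.mem_setOf_eq] at h ⊢
  intro hc
  have hne : {k | gameState 3 3 ω k = ∅}.Nonempty := ⟨n, hc⟩
  have h1 : gameState 3 3 ω (sInf {k | gameState 3 3 ω k = ∅}) = ∅ := Nat.sInf_mem hne
  rw [show sInf {k | gameState 3 3 ω k = ∅} = gameDuration 3 3 ω from rfl, h] at h1
  exact state_zero_ne ω h1

lemma measurableSet_duration (n : ℕ) :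
    MeasurableSet {ω : ℕ → E3 | gameDuration 3 3 ω = n} := by
  cases n with
  | zero =>
    have h : {ω : ℕ → E3 | gameDuration 3 3 ω = 0}
        = (⋃ m : ℕ, {ω : ℕ → E3 | gameDuration 3 3 ω = m + 1})ᶜ := by
      ext ω
      simp only [Set.mem_setOf_eq, Set.mem_compl_iff, Set.mem_iUnion]
      constructor
      · intro h ⟨m, hm⟩; omega
      · intro h
        rcases Nat.eq_zero_or_eq_succ_pred (gameDuration 3 3 ω) with h0 | h1
        · exact h0
        · exact absurd ⟨_, h1⟩ h
    rw [h]
    refine (MeasurableSet.iUnion fun m => ?_).compl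
    rw [duration_event]
    exact (measurableSet_ne_empty m).diff (measurableSet_ne_empty (m+1))
  | succ m =>
    rw [duration_event]
    exact (measurableSet_ne_empty m).diff (measurableSet_ne_empty (m+1))

include hindep hunif in
lemma dr_toReal (n : ℕ) : (μ {ω : ℕ → E3 | gameState 3 3 ω n ≠ ∅}).toReal
    = 3 * ((3:ℝ)⁻¹)^n - 2 * ((9:ℝ)⁻¹)^n := by
  rw [meas_ne_empty hindep hunif n]
  rw [ENNReal.toReal_mul, ENNReal.toReal_pow, ENNReal.toReal_inv]
  have h1 : (1:ℕ) ≤ 3^n := Nat.one_le_pow _ _ (by norm_num)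
  have h2 : (2:ℕ) ≤ 3 * 3^n := by omega
  have hc : (((3^n * (3 * 3^n - 2) : ℕ)) : ENNReal).toReal = ((3:ℝ)^n * (3 * 3^n - 2)) := by
    simp only [ENNReal.toReal_natCast]
    push_cast [h2]
    ring
  rw [hc]
  have h27 : ((27:ENNReal)).toReal = (27:ℝ) := by norm_num
  rw [h27, inv_pow, inv_pow, inv_pow]
  have h9n : (9:ℝ)^n = 3^n * 3^n := by rw [show (9:ℝ) = 3*3 by norm_num, mul_pow]
  have h27n : (27:ℝ)^n = 3^n * (3^n * 3^n) := by
    rw [show (27:ℝ) = 3*(3*3) by norm_num, mul_pow, mul_pow]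
  have h3 : ((3:ℝ))^n ≠ 0 := by positivity
  rw [h9n, h27n]
  field_simp

include hindep hunif in
lemma duration_zero (hT0 : True) : μ {ω : ℕ → E3 | gameDuration 3 3 ω = 0} = 0 := by
  set t := (μ {ω : ℕ → E3 | gameDuration 3 3 ω = 0}).toReal with ht
  have hle : ∀ n : ℕ, t ≤ 3 * ((3:ℝ)⁻¹)^n := by
    intro n
    have h1 : μ {ω : ℕ → E3 | gameDuration 3 3 ω = 0}
        ≤ μ {ω : ℕ → E3 | gameState 3 3 ω n ≠ ∅} := measure_mono (duration_zero_subset n)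
    have h2 := ENNReal.toReal_mono (measure_ne_top μ _) h1
    rw [dr_toReal hindep hunif n] at h2
    have h3 : (0:ℝ) ≤ 2 * ((9:ℝ)⁻¹)^n := by positivity
    linarith
  have htend : Filter.Tendsto (fun n : ℕ => 3 * ((3:ℝ)⁻¹)^n) Filter.atTop (nhds 0) := by
    have := tendsto_pow_atTop_nhds_zero_of_lt_one (by norm_num : (0:ℝ) ≤ 3⁻¹) (by norm_num : (3:ℝ)⁻¹ < 1)
    simpa using this.const_mul 3
  have ht0 : t ≤ 0 := ge_of_tendsto' htend hle
  have htnn : 0 ≤ t := ENNReal.toReal_nonneg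
  have : t = 0 := le_antisymm ht0 htnn
  rw [ht] at this
  exact (ENNReal.toReal_eq_zero_iff _).mp this |>.resolve_right (measure_ne_top μ _)

include hindep hunif in
lemma duration_succ_toReal (m : ℕ) :
    (μ {ω : ℕ → E3 | gameDuration 3 3 ω = m + 1}).toReal
      = (3 * ((3:ℝ)⁻¹)^m - 2 * ((9:ℝ)⁻¹)^m) - (3 * ((3:ℝ)⁻¹)^(m+1) - 2 * ((9:ℝ)⁻¹)^(m+1)) := by
  set A := {ω : ℕ → E3 | gameState 3 3 ω m ≠ ∅}
  set B := {ω : ℕ → E3 | gameState 3 3 ω (m+1) ≠ ∅}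
  have hBA : B ⊆ A := by
    intro ω h
    simp only [B, A, Set.mem_setOf_eq] at h ⊢
    intro hc
    exact h (state_empty_succ ω m hc)
  have hkey : μ (A \ B) + μ B = μ A := by
    rw [← measure_union disjoint_sdiff_self_left (measurableSet_ne_empty (m+1)),
      Set.diff_union_of_subset hBA]
  have h1 : (μ (A \ B)).toReal + (μ B).toReal = (μ A).toReal := by
    rw [← ENNReal.toReal_add (measure_ne_top μ _) (measure_ne_top μ _), hkey]
  rw [duration_event]
  have hA := dr_toReal hindep hunif m
  have hB := dr_toReal hindep hunif (m+1)
  rw [show {ω : ℕ → E3 | gameState 3 3 ω m ≠ ∅} = A from rfl,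
    show {ω : ℕ → E3 | gameState 3 3 ω (m+1) ≠ ∅} = B from rfl] at *
  linarith


include hindep hunif in
theorem main_pgf :
    ∀ x : ℝ, |x| < 1 →
      ∫ ω, x ^ gameDuration 3 3 ω ∂μ = 2 * x * (5 * x + 3) / ((3 - x) * (9 - x)) := by
  intro x hx
  classical
  obtain ⟨hx1, hx2⟩ := abs_lt.mp hx
  set s : ℕ → Set (ℕ → E3) := fun n => {ω | gameDuration 3 3 ω = n} with hs
  have hmeas : ∀ n, MeasurableSet (s n) := measurableSet_duration
  have hdisj : Pairwise (Function.onFun Disjoint s) := by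
    intro m n hmn
    show Disjoint _ _
    rw [Set.disjoint_left]
    intro ω ha hb
    exact hmn ((Set.mem_setOf_eq.mp ha).symm.trans (Set.mem_setOf_eq.mp hb))
  have hUnion : (⋃ n, s n) = Set.univ := by
    ext ω; simp only [Set.mem_iUnion, Set.mem_univ, iff_true, hs, Set.mem_setOf_eq]
    exact ⟨gameDuration 3 3 ω, rfl⟩
  have hTmeas : Measurable (gameDuration 3 3 : (ℕ → E3) → ℕ) := by
    apply measurable_to_countable'
    intro n
    have : (gameDuration 3 3 : (ℕ → E3) → ℕ) ⁻¹' {n} = s n := by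
      ext ω; simp [hs]
    rw [this]; exact hmeas n
  have hfmeas : Measurable fun ω : ℕ → E3 => x ^ gameDuration 3 3 ω :=
    (measurable_from_nat (f := fun n : ℕ => x ^ n)).comp hTmeas
  have hint : Integrable (fun ω : ℕ → E3 => x ^ gameDuration 3 3 ω) μ := by
    refine Integrable.mono' (integrable_const 1) hfmeas.aestronglyMeasurable
      (Filter.Eventually.of_forall fun ω => ?_)
    rw [Real.norm_eq_abs, abs_pow]
    exact pow_le_one₀ (abs_nonneg x) hx.le
  have h1 : ∫ ω, x ^ gameDuration 3 3 ω ∂μ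
      = ∑' n, ∫ ω in s n, x ^ gameDuration 3 3 ω ∂μ := by
    rw [← setIntegral_univ, ← hUnion]
    exact integral_iUnion hmeas hdisj (hUnion ▸ hint.integrableOn)
  have h2 : ∀ n, ∫ ω in s n, x ^ gameDuration 3 3 ω ∂μ = x ^ n * (μ (s n)).toReal := by
    intro n
    have hcongr : Set.EqOn (fun ω : ℕ → E3 => x ^ gameDuration 3 3 ω) (fun _ => x ^ n) (s n) :=
      fun ω hω => by simp only [hs, Set.mem_setOf_eq] at hω; simp [hω]
    rw [setIntegral_congr_fun (hmeas n) hcongr, setIntegral_const, smul_eq_mul, mul_comm, measureReal_def]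
  set h : ℕ → ℝ := fun n => 6*(x/3)^n - 16*(x/9)^n with hh
  have habs3 : |x/3| < 1 := by rw [abs_div]; rw [abs_of_pos (by norm_num : (0:ℝ) < 3)]; linarith [abs_lt.mpr ⟨hx1, hx2⟩, abs_nonneg x, hx]
  have habs9 : |x/9| < 1 := by rw [abs_div]; rw [abs_of_pos (by norm_num : (0:ℝ) < 9)]; linarith [abs_nonneg x, hx]
  have hgeom3 : HasSum (fun n : ℕ => (x/3)^n) (1 - x/3)⁻¹ := hasSum_geometric_of_abs_lt_one habs3
  have hgeom9 : HasSum (fun n : ℕ => (x/9)^n) (1 - x/9)⁻¹ := hasSum_geometric_of_abs_lt_one habs9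
  have hH : HasSum h (6*(1-x/3)⁻¹ - 16*(1-x/9)⁻¹) := (hgeom3.mul_left 6).sub (hgeom9.mul_left 16)
  have hq : HasSum (Function.update h 0 0) (0 - h 0 + (6*(1-x/3)⁻¹ - 16*(1-x/9)⁻¹)) :=
    hH.update 0 0
  have hfun : (fun n => x ^ n * (μ (s n)).toReal) = Function.update h 0 0 := by
    funext n
    cases n with
    | zero =>
      rw [Function.update_self]
      have : μ (s 0) = 0 := duration_zero hindep hunif trivial
      rw [this]
      simp
    | succ m =>
      rw [Function.update_of_ne (Nat.succ_ne_zero m)]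
      have := duration_succ_toReal hindep hunif m
      rw [show μ (s (m+1)) = μ {ω : ℕ → E3 | gameDuration 3 3 ω = m + 1} from rfl, this, hh]
      simp only []
      rw [div_pow, div_pow, inv_pow, inv_pow, inv_pow, inv_pow]
      have e3 : ((3:ℝ)^m) ≠ 0 := by positivity
      have e9 : ((9:ℝ)^m) ≠ 0 := by positivity
      have e3' : ((3:ℝ)^(m+1)) ≠ 0 := by positivity
      have e9' : ((9:ℝ)^(m+1)) ≠ 0 := by positivity
      field_simp
      ring
  have hfin : ∫ ω, x ^ gameDuration 3 3 ω ∂μ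
      = 0 - h 0 + (6*(1-x/3)⁻¹ - 16*(1-x/9)⁻¹) := by
    rw [h1, tsum_congr h2, hfun, hq.tsum_eq]
  rw [hfin]
  have h0 : h 0 = -10 := by rw [hh]; norm_num
  rw [h0]
  have n1 : (1:ℝ) - x/3 ≠ 0 := by intro hc; nlinarith
  have n2 : (1:ℝ) - x/9 ≠ 0 := by intro hc; nlinarith
  have n3 : (3:ℝ) - x ≠ 0 := by intro hc; nlinarith
  have n4 : (9:ℝ) - x ≠ 0 := by intro hc; nlinarith
  field_simp
  ring

end


/-- For the ball-and-cell game with `3` balls and `3` cells (each round every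
remaining ball is placed independently uniformly at random into one of the 3 cells and sole
occupants are removed, rounds independent), the probability generating function of the
duration is `F(x) = 2x(5x+3)/((3−x)(9−x))`. -/
theorem ball_cell_three_balls_three_cells_pgf
    (μ : Measure (ℕ → Fin 3 → Fin 3)) [IsProbabilityMeasure μ]
    (hindep : iIndepFun (fun k ω => ω k) μ)
    (hunif : ∀ (k : ℕ) (g : Fin 3 → Fin 3), μ {ω | ω k = g} = ((3 : ENNReal) ^ 3)⁻¹) :
    ∀ x : ℝ, |x| < 1 →
      ∫ ω, x ^ gameDuration 3 3 ω ∂μ = 2 * x * (5 * x + 3) / ((3 - x) * (9 - x)) := by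
  intro x hx
  exact main_pgf hindep hunif x hx
end
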